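/- arXiv:1603.03059 — 8 statements merged into one kernel-verified Lean document; each statement's English description precedes it below -/
import Mathlib

section
/- For every word u over U = {a,c,d}, the word f(g(u)) over S = {1,2,3} is factor-good, i.e., contains none of the factors 1231321, 1321231, 2132312, 2312132, 3123213, 3213123. -/
/-!
Alphabet encodings:
* `S = {1,2,3}` is `Fin 3` with `1 ↦ 0`, `2 ↦ 1`, `3 ↦ 2` (so `1 < 2 < 3` matches `0 < 1 < 2`).
* `T = {a,b,c,d}` is `Fin 4` with `a ↦ 0`, `b ↦ 1`, `c ↦ 2`, `d ↦ 3`.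
* `U = {a,c,d}` is `Fin 3` with `a ↦ 0`, `c ↦ 1`, `d ↦ 2` (so `a < c < d` matches `0 < 1 < 2`).
-/

/-- The six forbidden factors `1231321, 1321231, 2132312, 2312132, 3123213, 3213123`
(images of the letter pattern `xyzxzyx`). -/
def Forbidden : List (List (Fin 3)) :=
  [[0,1,2,0,2,1,0], [0,2,1,0,1,2,0], [1,0,2,1,2,0,1],
   [1,2,0,1,0,2,1], [2,0,1,2,1,0,2], [2,1,0,2,0,1,2]]

/-- A finite word is square-free if it has no nonempty factor `x ++ x`. -/
def SquareFreeL {α : Type*} (w : List α) : Prop :=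
  ∀ x : List α, x ≠ [] → ¬ (x ++ x) <:+: w

/-- A finite word over `S` is factor-good if no forbidden factor occurs in it. -/
def FactorGoodL (w : List (Fin 3)) : Prop :=
  ∀ p ∈ Forbidden, ¬ p <:+: w

/-- A finite word over `S` is good if it is square-free and factor-good. -/
def GoodL (w : List (Fin 3)) : Prop := SquareFreeL w ∧ FactorGoodL w

/-- The factor of an ω-word `w` starting at position `i`, of length `n`. -/
def factorAtN {α : Type*} (w : ℕ → α) (i n : ℕ) : List α :=
  (List.range n).map fun k => w (i + k)

/-- `l` is a (finite) factor of the ω-word `w`. -/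
def IsFactorN {α : Type*} (l : List α) (w : ℕ → α) : Prop :=
  ∃ i : ℕ, l = factorAtN w i l.length

/-- An ω-word is square-free if no nonempty `x ++ x` is a factor of it. -/
def SquareFreeN {α : Type*} (w : ℕ → α) : Prop :=
  ∀ x : List α, x ≠ [] → ¬ IsFactorN (x ++ x) w

/-- An ω-word over `S` is factor-good if no forbidden factor occurs in it. -/
def FactorGoodN (w : ℕ → Fin 3) : Prop :=
  ∀ p ∈ Forbidden, ¬ IsFactorN p w

/-- An ω-word over `S` is good if it is square-free and factor-good. -/
def GoodN (w : ℕ → Fin 3) : Prop := SquareFreeN w ∧ FactorGoodN w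

/-- The factor of a ℤ-word `w` starting at position `i`, of length `n`. -/
def factorAtZ {α : Type*} (w : ℤ → α) (i : ℤ) (n : ℕ) : List α :=
  (List.range n).map fun k => w (i + k)

/-- `l` is a (finite) factor of the ℤ-word `w`. -/
def IsFactorZ {α : Type*} (l : List α) (w : ℤ → α) : Prop :=
  ∃ i : ℤ, l = factorAtZ w i l.length

/-- A ℤ-word is square-free if no nonempty `x ++ x` is a factor of it. -/
def SquareFreeZ {α : Type*} (w : ℤ → α) : Prop :=
  ∀ x : List α, x ≠ [] → ¬ IsFactorZ (x ++ x) w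

/-- A ℤ-word over `S` is factor-good if no forbidden factor occurs in it. -/
def FactorGoodZ (w : ℤ → Fin 3) : Prop :=
  ∀ p ∈ Forbidden, ¬ IsFactorZ p w

/-- A ℤ-word over `S` is good if it is square-free and factor-good. -/
def GoodZ (w : ℤ → Fin 3) : Prop := SquareFreeZ w ∧ FactorGoodZ w

/-- The ω-word `w` is the infinite concatenation `blocks 0 · blocks 1 · blocks 2 ⋯`. -/
def NConcat {α : Type*} (w : ℕ → α) (blocks : ℕ → List α) : Prop :=
  ∃ p : ℕ → ℕ, p 0 = 0 ∧ (∀ i, p (i + 1) = p i + (blocks i).length) ∧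
    ∀ i, blocks i = factorAtN w (p i) (blocks i).length

/-- The ℤ-word `w` is the bi-infinite concatenation `⋯ blocks (-1) · blocks 0 · blocks 1 ⋯`
(up to a shift of indexing). -/
def ZConcat {α : Type*} (w : ℤ → α) (blocks : ℤ → List α) : Prop :=
  ∃ p : ℤ → ℤ, (∀ i, p (i + 1) = p i + (blocks i).length) ∧
    ∀ i, blocks i = factorAtZ w (p i) (blocks i).length

/-- The morphism `f : T* → S*` on letters:
`f(a) = 1213`, `f(b) = 123`, `f(c) = 1323`, `f(d) = 1232`. -/
def fL : Fin 4 → List (Fin 3) := ![[0,1,0,2], [0,1,2], [0,2,1,2], [0,1,2,1]]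

/-- The morphism `f : T* → S*` on finite words. -/
def fW (v : List (Fin 4)) : List (Fin 3) := (v.map fL).flatten

/-- The inclusion `U → T`: `a ↦ a`, `c ↦ c`, `d ↦ d`. -/
def uT : Fin 3 → Fin 4 := ![0, 2, 3]

/-- Does `g` insert the letter `b` between `x` and `y`?  True exactly for the
pairs `ac`, `da`, `dc`. -/
def needB (x y : Fin 3) : Bool :=
  (x == 0 && y == 1) || (x == 2 && y == 0) || (x == 2 && y == 1)

/-- The map `g : U* → T*`, replacing each factor `ac` by `abc`, `da` by `dba`
and `dc` by `dbc`. -/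
def gW : List (Fin 3) → List (Fin 4)
  | [] => []
  | [x] => [uT x]
  | x :: y :: r => (uT x :: (if needB x y then [(1 : Fin 4)] else [])) ++ gW (y :: r)

/-- The block of `f(g(u))` contributed by position `i` of the ω-word `u` over `U`:
the `f`-image of `u i`, followed by `f(b) = 123` when `g` inserts a `b` after `u i`. -/
def fgBlockN (u : ℕ → Fin 3) (i : ℕ) : List (Fin 3) :=
  fL (uT (u i)) ++ (if needB (u i) (u (i + 1)) then fL 1 else [])

/-- The block of `f(g(u))` contributed by position `i` of the ℤ-word `u` over `U`. -/
def fgBlockZ (u : ℤ → Fin 3) (i : ℤ) : List (Fin 3) :=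
  fL (uT (u i)) ++ (if needB (u i) (u (i + 1)) then fL 1 else [])

/-- The letter permutation `π` of `S`: fixes `1`, interchanges `2` and `3`. -/
def pi3 : Fin 3 → Fin 3 := ![0, 2, 1]

/-- Lexicographic order on ω-words: `v ≤ w` iff `v = w` or at the first index
where they differ the letter of `v` is smaller. -/
def LexLeN {α : Type*} [LinearOrder α] (v w : ℕ → α) : Prop :=
  v = w ∨ ∃ n : ℕ, (∀ k < n, v k = w k) ∧ v n < w n

section Stmt5Aux

instance stmt5_decFG : DecidablePred FactorGoodL := fun _ => List.decidableBAll _ _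

lemma stmt5_base0 : FactorGoodL (fW (gW [])) := by decide
lemma stmt5_base1 : ∀ x : Fin 3, FactorGoodL (fW (gW [x])) := by decide
lemma stmt5_base2 : ∀ x y : Fin 3, FactorGoodL (fW (gW [x,y])) := by decide
lemma stmt5_base3 : ∀ x y z : Fin 3, FactorGoodL (fW (gW [x,y,z])) := by decide
lemma stmt5_base4 : ∀ x y z w : Fin 3, FactorGoodL (fW (gW [x,y,z,w])) := by decide

/-- the block contributed by `x` followed by `y`. -/
def stmt5_Bk (x y : Fin 3) : List (Fin 3) :=
  fL (uT x) ++ (if needB x y then fL 1 else [])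

lemma stmt5_fW_append (a b : List (Fin 4)) : fW (a ++ b) = fW a ++ fW b := by
  simp [fW]

lemma stmt5_cons (x y : Fin 3) (r : List (Fin 3)) :
    fW (gW (x :: y :: r)) = stmt5_Bk x y ++ fW (gW (y :: r)) := by
  show fW ((uT x :: (if needB x y then [(1:Fin 4)] else [])) ++ gW (y :: r)) = _
  rw [stmt5_fW_append]
  congr 1
  by_cases h : needB x y <;> simp [h, fW, stmt5_Bk]

lemma stmt5_gW_prefix3 (y z w : Fin 3) (r : List (Fin 3)) :
    gW [y, z, w] <+: gW (y :: z :: w :: r) := by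
  cases r with
  | nil => exact List.prefix_refl _
  | cons q r' =>
      refine ⟨(if needB w q then [(1:Fin 4)] else []) ++ gW (q :: r'), ?_⟩
      simp [gW]

lemma stmt5_len3 : ∀ y z w : Fin 3, 6 ≤ (fW (gW [y, z, w])).length := by decide

lemma stmt5_take6 (y z w : Fin 3) (r : List (Fin 3)) :
    (fW (gW (y :: z :: w :: r))).take 6 = (fW (gW [y, z, w])).take 6 := by
  obtain ⟨e, he⟩ := stmt5_gW_prefix3 y z w r
  have : fW (gW (y :: z :: w :: r)) = fW (gW [y, z, w]) ++ fW e := by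
    rw [← stmt5_fW_append, he]
  rw [this, List.take_append,
    Nat.sub_eq_zero_of_le (stmt5_len3 y z w), List.take_zero, List.append_nil]

lemma stmt5_infix_split {α : Type*} (p a w : List α) (hp : p ≠ []) (h : p <:+: a ++ w) :
    p <:+: w ∨ p <:+: a ++ w.take (p.length - 1) := by
  obtain ⟨s, t, h⟩ := h
  by_cases hs : a.length ≤ s.length
  · left
    have hw : s.drop a.length ++ (p ++ t) = w := by
      have h' : s ++ (p ++ t) = a ++ w := by rw [← List.append_assoc]; exact h
      have := congrArg (List.drop a.length) h' 
      simp only [List.drop_append, Nat.sub_eq_zero_of_le hs, Nat.sub_self,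
        Nat.zero_sub, List.drop_zero, List.drop_length, List.nil_append] at this
      exact this
    exact ⟨s.drop a.length, t, by rw [← hw, List.append_assoc]⟩
  · right
    push_neg at hs
    have hsp : s ++ p <+: a ++ w := ⟨t, h⟩
    have hlen : (s ++ p).length ≤ a.length + (p.length - 1) := by
      have hp1 : 1 ≤ p.length := List.length_pos_iff.mpr hp
      rw [List.length_append]
      omega
    have htake : (a ++ w).take (a.length + (p.length - 1)) = a ++ w.take (p.length - 1) := by
      rw [List.take_append, List.take_of_length_le (by omega),
        Nat.add_sub_cancel_left]
    obtain ⟨t2, ht2⟩ := hsp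
    have : s ++ p <+: a ++ w.take (p.length - 1) := by
      rw [← htake, ← ht2, List.take_append,
        List.take_of_length_le hlen]
      exact ⟨_, rfl⟩
    calc p <:+: s ++ p := ⟨s, [], by simp⟩
      _ <:+: a ++ w.take (p.length - 1) := this.isInfix

lemma stmt5_main : ∀ n (u : List (Fin 3)), u.length ≤ n → FactorGoodL (fW (gW u)) := by
  intro n
  induction n with
  | zero =>
      intro u hu
      rw [List.length_eq_zero_iff.mp (Nat.le_zero.mp hu)]
      exact stmt5_base0
  | succ n ih =>
      intro u hu
      match u with
      | [] => exact stmt5_base0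
      | [x] => exact stmt5_base1 x
      | [x, y] => exact stmt5_base2 x y
      | [x, y, z] => exact stmt5_base3 x y z
      | x :: y :: z :: w :: r =>
        intro p hp hinf
        have hp7 : p.length = 7 := by
          simp only [Forbidden, List.mem_cons, List.not_mem_nil, or_false] at hp
          rcases hp with rfl | rfl | rfl | rfl | rfl | rfl <;> rfl
        have hpne : p ≠ [] := by intro h; rw [h] at hp7; simp at hp7
        rw [stmt5_cons] at hinf
        rcases stmt5_infix_split p _ _ hpne hinf with h | h
        · exact ih (y :: z :: w :: r) (by simpa using Nat.le_of_succ_le_succ hu) p hp h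
        · apply stmt5_base4 x y z w p hp
          rw [hp7] at h
          norm_num at h
          rw [stmt5_take6 y z w r] at h
          have h2 : stmt5_Bk x y ++ (fW (gW [y, z, w])).take 6 <+:
              stmt5_Bk x y ++ fW (gW [y, z, w]) := by
            obtain ⟨e, he⟩ := List.take_prefix 6 (fW (gW [y, z, w]))
            exact ⟨e, by rw [List.append_assoc, he]⟩
          rw [← stmt5_cons x y [z, w]] at h2
          exact h.trans h2.isInfix

end Stmt5Aux

/-- For every word `u` over `U = {a,c,d}`, the word `f(g(u))` is factor-good. -/
theorem stmt_5 (u : List (Fin 3)) : FactorGoodL (fW (gW u)) := by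
  exact stmt5_main u.length u le_rfl
end

section
/- Let w be a good word over S = {1,2,3} (finite, ω- or ℤ-word). Then 1231 is not a factor of w, or 1321 is not a factor of w. -/
section Aux

open List

instance {α : Type*} [DecidableEq α] (w : List α) : Decidable (SquareFreeL w) :=
  decidable_of_iff (∀ t ∈ w.tails, ∀ x ∈ t.inits, x = [] ∨ ¬ (x ++ x) <+: t) (by
    constructor
    · intro h x hx hinf
      obtain ⟨t, hpre, hsuf⟩ := List.infix_iff_prefix_suffix.1 hinf
      have hx2 : x <+: t := (x.prefix_append x).trans hpre
      rcases h t ((List.mem_tails _ _).2 hsuf) x ((List.mem_inits _ _).2 hx2) with h' | h'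
      · exact hx h'
      · exact h' hpre
    · intro h t ht x hxi
      by_cases hx : x = []
      · exact Or.inl hx
      · exact Or.inr fun hp => h x hx
          (List.infix_iff_prefix_suffix.2 ⟨t, hp, (List.mem_tails _ _).1 ht⟩))

instance (w : List (Fin 3)) : Decidable (FactorGoodL w) := by
  unfold FactorGoodL; infer_instance

instance (w : List (Fin 3)) : Decidable (GoodL w) := by
  unfold GoodL; infer_instance

/-- The 29-state suffix-window certificate. -/
def Acert : List (List (Fin 3)) :=
[[0,1,2,0],
 [0,1,2,0,1],
 [0,1,2,0,2],
 [0,1,2,0,1,0],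
 [0,1,2,0,2,1],
 [0,1,0,2,0,1,2],
 [0,1,2,0,1,0,2],
 [0,1,2,0,2,1,2],
 [0,1,2,1,0,1,2],
 [0,2,0,1,2,0,2],
 [0,2,0,1,2,1,0],
 [0,2,1,2,0,1,0],
 [0,2,1,2,0,1,2],
 [1,0,1,2,0,1,0],
 [1,0,1,2,0,2,1],
 [1,0,2,0,1,2,0],
 [1,0,2,0,1,2,1],
 [1,2,0,1,0,2,0],
 [1,2,0,1,2,1,0],
 [1,2,0,2,1,2,0],
 [1,2,1,0,1,2,0],
 [2,0,1,0,2,0,1],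
 [2,0,1,2,0,2,1],
 [2,0,1,2,1,0,1],
 [2,0,2,1,2,0,1],
 [2,1,0,1,2,0,1],
 [2,1,0,1,2,0,2],
 [2,1,2,0,1,0,2],
 [2,1,2,0,1,2,1]]

set_option maxRecDepth 4000 in
lemma check_step : ∀ t ∈ Acert, ∀ a : Fin 3, GoodL (t ++ [a]) →
    (if t.length = 7 then t.tail ++ [a] else t ++ [a]) ∈ Acert := by decide

lemma check_nosuf : ∀ t ∈ Acert, ¬ ([0,2,1,0] : List (Fin 3)) <:+ t := by decide

lemma check_len : ∀ t ∈ Acert, t.length ≤ 7 := by decide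

lemma goodL_infix {u w : List (Fin 3)} (h : u <:+: w) (hw : GoodL w) : GoodL u := by
  refine ⟨fun x hx hinf => hw.1 x hx (hinf.trans h), fun p hp hinf => hw.2 p hp (hinf.trans h)⟩

lemma window : ∀ n (w : List (Fin 3)), GoodL w → [0,1,2,0] <+: w → w.length = n + 4 →
    ∃ t ∈ Acert, t <:+ w ∧ (t = w ∨ t.length = 7) := by
  intro n
  induction n with
  | zero =>
    intro w hg hp hl
    have : ([0,1,2,0] : List (Fin 3)) = w := hp.eq_of_length (by simpa using hl.symm)
    subst this
    exact ⟨[0,1,2,0], by decide, List.suffix_refl _, Or.inl rfl⟩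
  | succ n ih =>
    intro w hg hp hl
    have hne : w ≠ [] := by intro h; rw [h] at hl; simp at hl
    obtain ⟨u, a, rfl⟩ : ∃ u a, w = u ++ [a] := ⟨w.dropLast, w.getLast hne, by
      rw [List.dropLast_append_getLast hne]⟩
    have hul : u.length = n + 4 := by have := hl; simp at this; omega
    have hupre : u <+: u ++ [a] := ⟨[a], rfl⟩
    have hug : GoodL u := goodL_infix hupre.isInfix hg
    have hup : [0,1,2,0] <+: u := by
      refine List.prefix_of_prefix_length_le hp hupre ?_
      simp [hul]
    obtain ⟨t, htA, ⟨s, hs⟩, hor⟩ := ih u hug hup hul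
    have htg : GoodL (t ++ [a]) := by
      refine goodL_infix ?_ hg
      exact (⟨s, [], by rw [← hs]; simp⟩ : t ++ [a] <:+: u ++ [a])
    have hmem := check_step t htA a htg
    by_cases h7 : t.length = 7
    · rw [if_pos h7] at hmem
      refine ⟨t.tail ++ [a], hmem, ?_, Or.inr (by simp [List.length_tail, h7])⟩
      obtain ⟨s', hs'⟩ := t.tail_suffix
      refine ⟨s ++ s', ?_⟩
      rw [show s ++ s' ++ (t.tail ++ [a]) = (s ++ (s' ++ t.tail)) ++ [a] by simp, hs', hs]
    · rw [if_neg h7] at hmem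
      have htu : t = u := by
        rcases hor with h | h
        · exact h
        · exact absurd h h7
      subst htu
      exact ⟨t ++ [a], hmem, List.suffix_refl _, Or.inl rfl⟩

lemma key : ∀ w : List (Fin 3), GoodL w → [0,1,2,0] <+: w → ¬ [0,2,1,0] <:+ w := by
  intro w hg hp hs
  have h4 : 4 ≤ w.length := hp.length_le
  obtain ⟨t, htA, hts, hor⟩ := window (w.length - 4) w hg hp (by omega)
  have h14 : ([0,2,1,0] : List (Fin 3)) <:+ t := by
    rcases hor with rfl | h7
    · exact hs
    · exact List.suffix_of_suffix_length_le hs hts (by rw [h7]; norm_num)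
  exact check_nosuf t htA h14

end Aux

section Main

open List

lemma pi3_pi3 : ∀ x, pi3 (pi3 x) = x := by decide

lemma map_pi3_pi3 (l : List (Fin 3)) : (l.map pi3).map pi3 = l := by
  rw [List.map_map]
  have : pi3 ∘ pi3 = id := funext pi3_pi3
  rw [this, List.map_id]

lemma forb_map : ∀ p ∈ Forbidden, p.map pi3 ∈ Forbidden := by decide

lemma goodL_map_pi3 {w : List (Fin 3)} (hw : GoodL w) : GoodL (w.map pi3) := by
  constructor
  · intro x hx hinf
    have h2 : ((x ++ x).map pi3) <:+: (w.map pi3).map pi3 := hinf.map pi3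
    rw [map_pi3_pi3, List.map_append] at h2
    exact hw.1 (x.map pi3) (by simpa using hx) h2
  · intro p hp hinf
    have h2 : (p.map pi3) <:+: (w.map pi3).map pi3 := hinf.map pi3
    rw [map_pi3_pi3] at h2
    exact hw.2 (p.map pi3) (forb_map p hp) h2

lemma ordered_case {w : List (Fin 3)} (hg : GoodL w) (s1 t1 s2 t2 : List (Fin 3))
    (h1 : s1 ++ [0,1,2,0] ++ t1 = w) (h2 : s2 ++ [0,2,1,0] ++ t2 = w)
    (hle : s1.length ≤ s2.length) : False := by
  set m := s2.length + 4 with hm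
  set u := (w.take m).drop s1.length with hu
  have hug : GoodL u := by
    refine goodL_infix ?_ hg
    exact ((w.take m).drop_suffix s1.length).isInfix.trans (w.take_prefix m).isInfix
  have hpre : [0,1,2,0] <+: u := by
    have hdrop : w.drop s1.length = [0,1,2,0] ++ t1 := by
      rw [← h1, List.append_assoc, List.drop_left]
    have hu2 : u = [0,1,2,0] ++ t1.take (m - s1.length - 4) := by
      rw [hu, List.drop_take, hdrop, List.take_append,
          List.take_of_length_le (by simp; omega)]
      simp
    exact hu2 ▸ ⟨_, rfl⟩
  have hsuf : [0,2,1,0] <:+ u := by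
    have htake : w.take m = s2 ++ [0,2,1,0] := by
      rw [← h2, List.take_left' (by simp [hm])]
    have hu3 : u = s2.drop s1.length ++ [0,2,1,0] := by
      rw [hu, htake, List.drop_append_of_le_length hle]
    exact ⟨_, hu3.symm⟩
  exact key u hug hpre hsuf

lemma pat_map : ([0,2,1,0] : List (Fin 3)).map pi3 = [0,1,2,0] := by decide
lemma pat_map' : ([0,1,2,0] : List (Fin 3)).map pi3 = [0,2,1,0] := by decide

lemma finite_main {w : List (Fin 3)} (hg : GoodL w)
    (h1 : [0,1,2,0] <:+: w) (h2 : [0,2,1,0] <:+: w) : False := by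
  obtain ⟨s1, t1, e1⟩ := h1
  obtain ⟨s2, t2, e2⟩ := h2
  rcases le_total s1.length s2.length with h | h
  · exact ordered_case hg s1 t1 s2 t2 e1 e2 h
  · refine ordered_case (goodL_map_pi3 hg) (s2.map pi3) (t2.map pi3) (s1.map pi3) (t1.map pi3)
      ?_ ?_ (by simpa using h)
    · rw [← e2, List.map_append, List.map_append, pat_map]
    · rw [← e1, List.map_append, List.map_append, pat_map']

section Nword

variable {α : Type*} {w : ℕ → α}

lemma length_factorAtN (w : ℕ → α) (i n : ℕ) : (factorAtN w i n).length = n := by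
  simp [factorAtN]

lemma factorAtN_append (w : ℕ → α) (i m n : ℕ) :
    factorAtN w i (m + n) = factorAtN w i m ++ factorAtN w (i + m) n := by
  simp only [factorAtN, List.range_add, List.map_append, List.map_map]
  congr 1
  apply List.map_congr_left
  intro k _
  simp [Function.comp, Nat.add_assoc, Nat.add_comm m k]

lemma eq_split_N {a b : List α} {i n : ℕ} (h : a ++ b = factorAtN w i n) :
    a = factorAtN w i a.length ∧ b = factorAtN w (i + a.length) b.length := by
  have hn : n = a.length + b.length := by
    have := congrArg List.length h
    simp [length_factorAtN] at this
    omega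
  subst hn
  rw [factorAtN_append] at h
  exact List.append_inj h (by simp [length_factorAtN])

lemma isFactorN_of_infix {l : List α} {i n : ℕ} (h : l <:+: factorAtN w i n) :
    IsFactorN l w := by
  obtain ⟨s, t, e⟩ := h
  rw [List.append_assoc] at e
  obtain ⟨-, e2⟩ := eq_split_N e
  obtain ⟨e3, -⟩ := eq_split_N e2
  exact ⟨i + s.length, e3⟩

lemma goodL_factorAtN {w : ℕ → Fin 3} (hw : GoodN w) (i n : ℕ) :
    GoodL (factorAtN w i n) := by
  exact ⟨fun x hx hinf => hw.1 x hx (isFactorN_of_infix hinf),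
    fun p hp hinf => hw.2 p hp (isFactorN_of_infix hinf)⟩

lemma windowN {p q : List α} {i j : ℕ} (hij : i ≤ j)
    (hp : p = factorAtN w i 4) (hq : q = factorAtN w j 4) :
    p <:+: factorAtN w i (j - i + 8) ∧ q <:+: factorAtN w i (j - i + 8) := by
  constructor
  · have h : factorAtN w i (j - i + 8) = factorAtN w i 4 ++ factorAtN w (i + 4) (j - i + 4) := by
      rw [show j - i + 8 = 4 + (j - i + 4) by omega, factorAtN_append]
    exact ⟨[], factorAtN w (i + 4) (j - i + 4), by rw [h, ← hp]; simp⟩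
  · have h : factorAtN w i (j - i + 8) =
        factorAtN w i (j - i) ++ (factorAtN w j 4 ++ factorAtN w (j + 4) 4) := by
      rw [show j - i + 8 = (j - i) + (4 + 4) by omega, factorAtN_append, factorAtN_append,
        show i + (j - i) = j by omega, show j + 4 = j + 4 by rfl]
    exact ⟨factorAtN w i (j - i), factorAtN w (j + 4) 4, by rw [List.append_assoc, h, ← hq]⟩

end Nword

section Zword

variable {α : Type*} {w : ℤ → α}

lemma factorAtZ_norm (w : ℤ → α) (i : ℤ) (n : ℕ) :
    factorAtZ w i n = (List.range n).map (fun k : ℕ => w (i + (k : ℤ))) := by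
  show ((List.range n).flatMap fun a : ℕ => [(a : ℤ)]).map (fun k : ℤ => w (i + k)) = _
  rw [show ((List.range n).flatMap fun a : ℕ => [(a : ℤ)]) =
      (List.range n).map (fun a : ℕ => (a : ℤ)) from List.flatMap_pure_eq_map _ _,
    List.map_map]
  rfl

lemma length_factorAtZ (w : ℤ → α) (i : ℤ) (n : ℕ) : (factorAtZ w i n).length = n := by
  rw [factorAtZ_norm, List.length_map, List.length_range]

lemma factorAtZ_eq (w : ℤ → α) (i : ℤ) (m n : ℕ) :
    factorAtZ w (i + (m : ℤ)) n = factorAtN (fun k => w (i + (k : ℤ))) m n := by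
  rw [factorAtZ_norm]
  simp only [factorAtN]
  apply List.map_congr_left
  intro k _
  congr 1
  push_cast
  ring

lemma factorAtZ_eq0 (w : ℤ → α) (i : ℤ) (n : ℕ) :
    factorAtZ w i n = factorAtN (fun k => w (i + (k : ℤ))) 0 n := by
  simpa using factorAtZ_eq w i 0 n

lemma factorAtZ_append (w : ℤ → α) (i : ℤ) (m n : ℕ) :
    factorAtZ w i (m + n) = factorAtZ w i m ++ factorAtZ w (i + (m : ℤ)) n := by
  rw [factorAtZ_eq0 w i (m + n), factorAtN_append, ← factorAtZ_eq0, Nat.zero_add,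
    ← factorAtZ_eq]

lemma eq_split_Z {a b : List α} {i : ℤ} {n : ℕ} (h : a ++ b = factorAtZ w i n) :
    a = factorAtZ w i a.length ∧ b = factorAtZ w (i + (a.length : ℤ)) b.length := by
  have hn : n = a.length + b.length := by
    have := congrArg List.length h
    simp [length_factorAtZ] at this
    omega
  subst hn
  rw [factorAtZ_append] at h
  exact List.append_inj h (by simp [length_factorAtZ])

lemma isFactorZ_of_infix {l : List α} {i : ℤ} {n : ℕ} (h : l <:+: factorAtZ w i n) :
    IsFactorZ l w := by
  obtain ⟨s, t, e⟩ := h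
  rw [List.append_assoc] at e
  obtain ⟨-, e2⟩ := eq_split_Z e
  obtain ⟨e3, -⟩ := eq_split_Z e2
  exact ⟨i + s.length, e3⟩

lemma goodL_factorAtZ {w : ℤ → Fin 3} (hw : GoodZ w) (i : ℤ) (n : ℕ) :
    GoodL (factorAtZ w i n) := by
  exact ⟨fun x hx hinf => hw.1 x hx (isFactorZ_of_infix hinf),
    fun p hp hinf => hw.2 p hp (isFactorZ_of_infix hinf)⟩

lemma windowZ {p q : List α} {i j : ℤ} (hij : i ≤ j)
    (hp : p = factorAtZ w i 4) (hq : q = factorAtZ w j 4) :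
    p <:+: factorAtZ w i ((j - i).toNat + 8) ∧ q <:+: factorAtZ w i ((j - i).toNat + 8) := by
  constructor
  · have h : factorAtZ w i ((j - i).toNat + 8) =
        factorAtZ w i 4 ++ factorAtZ w (i + 4) ((j - i).toNat + 4) := by
      rw [show (j - i).toNat + 8 = 4 + ((j - i).toNat + 4) by omega, factorAtZ_append]
      norm_num
    exact ⟨[], factorAtZ w (i + 4) ((j - i).toNat + 4), by rw [h, ← hp]; simp⟩
  · have h : factorAtZ w i ((j - i).toNat + 8) =
        factorAtZ w i (j - i).toNat ++ (factorAtZ w j 4 ++ factorAtZ w (j + 4) 4) := by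
      rw [show (j - i).toNat + 8 = (j - i).toNat + (4 + 4) by omega, factorAtZ_append,
        factorAtZ_append, show i + ((j - i).toNat : ℤ) = j by omega]
      norm_num
    exact ⟨factorAtZ w i (j - i).toNat, factorAtZ w (j + 4) 4, by rw [List.append_assoc, h, ← hq]⟩

end Zword

end Main

/-- For every good word `w` over `S` (finite, ω- or ℤ-word), `1231` is not a
factor of `w` or `1321` is not a factor of `w`. -/
theorem stmt_7 :
    (∀ w : List (Fin 3), GoodL w →
      ¬ [0,1,2,0] <:+: w ∨ ¬ [0,2,1,0] <:+: w) ∧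
    (∀ w : ℕ → Fin 3, GoodN w →
      ¬ IsFactorN [0,1,2,0] w ∨ ¬ IsFactorN [0,2,1,0] w) ∧
    (∀ w : ℤ → Fin 3, GoodZ w →
      ¬ IsFactorZ [0,1,2,0] w ∨ ¬ IsFactorZ [0,2,1,0] w) := by
  refine ⟨fun w hw => ?_, fun w hw => ?_, fun w hw => ?_⟩
  · by_contra h
    push_neg at h
    exact finite_main hw h.1 h.2
  · by_contra h
    push_neg at h
    obtain ⟨⟨i, hi⟩, ⟨j, hj⟩⟩ := h
    have hi' : ([0,1,2,0] : List (Fin 3)) = factorAtN w i 4 := hi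
    have hj' : ([0,2,1,0] : List (Fin 3)) = factorAtN w j 4 := hj
    rcases le_total i j with hij | hij
    · obtain ⟨ha, hb⟩ := windowN hij hi' hj'
      exact finite_main (goodL_factorAtN hw i (j - i + 8)) ha hb
    · obtain ⟨ha, hb⟩ := windowN hij hj' hi'
      exact finite_main (goodL_factorAtN hw j (i - j + 8)) hb ha
  · by_contra h
    push_neg at h
    obtain ⟨⟨i, hi⟩, ⟨j, hj⟩⟩ := h
    have hi' : ([0,1,2,0] : List (Fin 3)) = factorAtZ w i 4 := hi
    have hj' : ([0,2,1,0] : List (Fin 3)) = factorAtZ w j 4 := hj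
    rcases le_total i j with hij | hij
    · obtain ⟨ha, hb⟩ := windowZ hij hi' hj'
      exact finite_main (goodL_factorAtZ hw i ((j - i).toNat + 8)) ha hb
    · obtain ⟨ha, hb⟩ := windowZ hij hj' hi'
      exact finite_main (goodL_factorAtZ hw j ((i - j).toNat + 8)) hb ha
end

section
/- Every good finite word over S = {1,2,3} that has prefix 1231 and contains exactly one occurrence of 1231 as a factor is a prefix of one of the three words 12312131232123, 123132312131232123, 12313231232123. -/
/-- The number of occurrences of `l` as a factor of `w`. -/
def occCount (l w : List (Fin 3)) : ℕ :=
  ((List.range (w.length + 1)).filter fun i => l.isPrefixOf (w.drop i)).length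

-- auxiliary

def hasSqB (w : List (Fin 3)) : Bool :=
  (List.range w.length).any fun i =>
    (List.range w.length).any fun l =>
      decide (i + 2*(l+1) ≤ w.length) &&
        ((w.drop i).take (l+1) == (w.drop (i+(l+1))).take (l+1))

def forbB (w : List (Fin 3)) : Bool := Forbidden.any fun p => decide (p <:+: w)

def checkB (w : List (Fin 3)) : Bool :=
  !hasSqB w && !forbB w && [0,1,2,0].isPrefixOf w && (occCount [0,1,2,0] w == 1)

lemma take_drop_infix {α : Type*} (w : List α) (i l : ℕ) : (w.drop i).take l <:+: w :=
  (List.take_prefix l (w.drop i)).isInfix.trans (List.drop_suffix i w).isInfix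

lemma sq_of_hasSqB {w : List (Fin 3)} (h : hasSqB w = true) :
    ∃ x : List (Fin 3), x ≠ [] ∧ (x ++ x) <:+: w := by
  rw [hasSqB, List.any_eq_true] at h
  obtain ⟨i, hi, h⟩ := h
  rw [List.any_eq_true] at h
  obtain ⟨l, hl, h⟩ := h
  rw [Bool.and_eq_true, decide_eq_true_iff, beq_iff_eq] at h
  obtain ⟨hle, he⟩ := h
  rw [List.mem_range] at hi hl
  refine ⟨(w.drop i).take (l+1), ?_, ?_⟩
  · intro hnil
    have := congrArg List.length hnil
    simp [List.length_take, List.length_drop] at this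
    omega
  · have key : (w.drop i).take ((l+1)+(l+1))
        = (w.drop i).take (l+1) ++ ((w.drop i).drop (l+1)).take (l+1) :=
      List.take_add
    rw [List.drop_drop, ← he] at key
    rw [← key]; exact take_drop_infix w i _

lemma checkB_of_cond {w : List (Fin 3)} (hg : GoodL w)
    (hp : [0,1,2,0] <+: w) (hocc : occCount [0,1,2,0] w = 1) : checkB w = true := by
  have h1 : hasSqB w = false := by
    by_contra h
    rw [Bool.not_eq_false] at h
    obtain ⟨x, hx, hinf⟩ := sq_of_hasSqB h
    exact hg.1 x hx hinf
  have h2 : forbB w = false := by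
    by_contra h
    rw [Bool.not_eq_false, forbB, List.any_eq_true] at h
    obtain ⟨p, hpm, hinf⟩ := h
    exact hg.2 p hpm (decide_eq_true_iff.mp hinf)
  simp [checkB, h1, h2, List.isPrefixOf_iff_prefix.mpr hp, hocc]

lemma occ_mono {d w : List (Fin 3)} (h : d <+: w) (p : List (Fin 3)) :
    occCount p d ≤ occCount p w := by
  rw [occCount, occCount, ← List.countP_eq_length_filter, ← List.countP_eq_length_filter]
  calc List.countP (fun i => p.isPrefixOf (d.drop i)) (List.range (d.length + 1))
      ≤ List.countP (fun i => p.isPrefixOf (w.drop i)) (List.range (d.length + 1)) := by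
        apply List.countP_mono_left
        intro i _ hi
        exact List.isPrefixOf_iff_prefix.mpr
          ((List.isPrefixOf_iff_prefix.mp hi).trans (h.drop i))
    _ ≤ List.countP (fun i => p.isPrefixOf (w.drop i)) (List.range (w.length + 1)) :=
        List.Sublist.countP_le (List.range_sublist.mpr (by have := h.length_le; omega))

lemma occ_pos {d p : List (Fin 3)} (h : p <+: d) : 1 ≤ occCount p d := by
  rw [occCount]
  have : (0:ℕ) ∈ (List.range (d.length + 1)).filter fun i => p.isPrefixOf (d.drop i) := by
    rw [List.mem_filter]
    exact ⟨List.mem_range.mpr (by omega),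
      by simpa using List.isPrefixOf_iff_prefix.mpr h⟩
  exact List.length_pos_iff.mpr (List.ne_nil_of_mem this)

def T1 : List (Fin 3) := [0,1,2,0,1,0,2,0,1,2,1,0,1,2]
def T2 : List (Fin 3) := [0,1,2,0,2,1,2,0,1,0,2,0,1,2,1,0,1,2]
def T3 : List (Fin 3) := [0,1,2,0,2,1,2,0,1,2,1,0,1,2]

lemma frontierLem : ∀ n < 19, ∀ x : Fin 3, ∀ t ∈ [T1, T2, T3],
    checkB (t.take n ++ [x]) = true →
    ((t.take n ++ [x]).isPrefixOf T1 || (t.take n ++ [x]).isPrefixOf T2 ||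
     (t.take n ++ [x]).isPrefixOf T3) = true := by decide

lemma aux : ∀ n, ∀ w : List (Fin 3), w.length = n → GoodL w →
    [0,1,2,0] <+: w → occCount [0,1,2,0] w = 1 →
    w <+: T1 ∨ w <+: T2 ∨ w <+: T3 := by
  intro n
  induction n using Nat.strong_induction_on with
  | _ n ih =>
    intro w hlen hg hp hocc
    have hlen4 : 4 ≤ n := hlen ▸ hp.length_le
    rcases eq_or_lt_of_le hlen4 with h4 | h5
    · have : w = [0,1,2,0] := (hp.eq_of_length (by rw [hlen, ← h4]; rfl)).symm
      subst this
      left; decide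
    · -- n ≥ 5
      have hwne : w ≠ [] := by intro h; subst h; simp at hlen; omega
      set d := w.dropLast with hd
      have hdw : d <+: w := List.dropLast_prefix w
      have hdlen : d.length = n - 1 := by rw [hd, List.length_dropLast, hlen]
      have hp' : [0,1,2,0] <+: d := by
        rw [hd, List.dropLast_eq_take, hlen]
        exact List.prefix_take_iff.mpr ⟨hp, by have h4 : ([0,1,2,0] : List (Fin 3)).length = 4 := rfl; omega⟩
      have hgd : GoodL d := by
        constructor
        · intro x hx hinf; exact hg.1 x hx (hinf.trans hdw.isInfix)
        · intro p hpm hinf; exact hg.2 p hpm (hinf.trans hdw.isInfix)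
      have hoccd : occCount [0,1,2,0] d = 1 :=
        le_antisymm (hocc ▸ occ_mono hdw _) (occ_pos hp')
      have hIH := ih (n-1) (by omega) d hdlen hgd hp' hoccd
      have hw : d ++ [w.getLast hwne] = w := List.dropLast_append_getLast hwne
      have hchk : checkB w = true := checkB_of_cond hg hp hocc
      have key : ∀ t ∈ [T1, T2, T3], d <+: t → w <+: T1 ∨ w <+: T2 ∨ w <+: T3 := by
        intro t htm hdt
        have hdt' : d = t.take d.length := List.prefix_iff_eq_take.mp hdt
        have hnum : d.length < 19 := by
          have := hdt.length_le
          fin_cases htm <;> simp [T1, T2, T3] at this <;> omega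
        have := frontierLem d.length hnum (w.getLast hwne) t htm
          (by rw [← hdt', hw]; exact hchk)
        rw [← hdt', hw] at this
        simp only [Bool.or_eq_true, List.isPrefixOf_iff_prefix] at this
        tauto
      rcases hIH with h | h | h
      · exact key T1 (by simp) h
      · exact key T2 (by simp) h
      · exact key T3 (by simp) h


/-- Every good finite word over `S` with prefix `1231` containing exactly one
occurrence of `1231` is a prefix of `12312131232123`, `123132312131232123` or
`12313231232123`. -/
theorem stmt_8 (w : List (Fin 3)) (hg : GoodL w)
    (hp : [0,1,2,0] <+: w) (hocc : occCount [0,1,2,0] w = 1) :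
    w <+: [0,1,2,0,1,0,2,0,1,2,1,0,1,2] ∨
    w <+: [0,1,2,0,2,1,2,0,1,0,2,0,1,2,1,0,1,2] ∨
    w <+: [0,1,2,0,2,1,2,0,1,2,1,0,1,2] :=
  aux w.length w rfl hg hp hocc
end

section
/- Let t be a good ω-word over S = {1,2,3} of the form t = 1213·b₁·b₂·b₃·⋯ where each bᵢ ∈ {12, 123, 1232, 13, 1323}. Then t can be written as t = c₀·c₁·c₂·⋯ where each cᵢ ∈ {1213, 123, 1232, 1323}. -/
/-! ### Auxiliary lemmas for `stmt_9` -/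

lemma sf9_factorAtN_length {α : Type*} (w : ℕ → α) (i n : ℕ) :
    (factorAtN w i n).length = n := by simp [factorAtN]

lemma sf9_factorAtN_append {α : Type*} (w : ℕ → α) (i m n : ℕ) :
    factorAtN w i (m + n) = factorAtN w i m ++ factorAtN w (i + m) n := by
  simp only [factorAtN, List.range_add, List.map_append, List.map_map]
  congr 1
  apply List.map_congr_left
  intro k _
  simp only [Function.comp]
  congr 1
  omega

lemma sf9_infix_factor {α : Type*} {w : ℕ → α} {W l : List α}
    (hW : IsFactorN W w) (h : l <:+: W) : IsFactorN l w := by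
  obtain ⟨i, hi⟩ := hW
  obtain ⟨s, u, hsu⟩ := h
  refine ⟨i + s.length, ?_⟩
  have hlen : W.length = s.length + (l.length + u.length) := by
    rw [← hsu]; simp [List.length_append, Nat.add_assoc]
  rw [hlen, sf9_factorAtN_append, sf9_factorAtN_append] at hi
  have h1 : s = factorAtN w i s.length ∧
      l ++ u = factorAtN w (i + s.length) l.length ++
        factorAtN w (i + s.length + l.length) u.length := by
    apply List.append_inj
    · rw [List.append_assoc] at hsu; rw [hsu]; exact hi
    · rw [sf9_factorAtN_length]
  exact (List.append_inj h1.2 (by rw [sf9_factorAtN_length])).1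

/-- Concatenation of blocks `b j, b (j+1), …` (`n` of them). -/
def sf9_joinB {α : Type*} (b : ℕ → List α) : ℕ → ℕ → List α
  | _, 0 => []
  | j, n + 1 => b j ++ sf9_joinB b (j + 1) n

lemma sf9_join_factor {α : Type*} {t : ℕ → α} {b : ℕ → List α}
    (ht : NConcat t b) (n j : ℕ) : IsFactorN (sf9_joinB b j n) t := by
  obtain ⟨p, _, hplen, hpfac⟩ := ht
  suffices h : ∀ n j, sf9_joinB b j n = factorAtN t (p j) ((sf9_joinB b j n).length) by
    exact ⟨p j, h n j⟩
  intro n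
  induction n with
  | zero => intro j; simp [sf9_joinB, factorAtN]
  | succ n ih =>
    intro j
    show b j ++ sf9_joinB b (j + 1) n
      = factorAtN t (p j) ((b j ++ sf9_joinB b (j + 1) n).length)
    have hl : (b j ++ sf9_joinB b (j + 1) n).length
        = (b j).length + (sf9_joinB b (j + 1) n).length := by simp
    rw [hl, sf9_factorAtN_append, ← hplen j, ← hpfac j, ← ih (j + 1)]

lemma sf9_win2 {t : ℕ → Fin 3} {b : ℕ → List (Fin 3)} (ht : NConcat t b) (j : ℕ) :
    IsFactorN (b j ++ b (j+1)) t := by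
  have h := sf9_join_factor ht 2 j
  simpa [sf9_joinB] using h

lemma sf9_win3 {t : ℕ → Fin 3} {b : ℕ → List (Fin 3)} (ht : NConcat t b) (j : ℕ) :
    IsFactorN (b j ++ (b (j+1) ++ b (j+1+1))) t := by
  have h := sf9_join_factor ht 3 j
  simpa [sf9_joinB] using h

lemma sf9_win4 {t : ℕ → Fin 3} {b : ℕ → List (Fin 3)} (ht : NConcat t b) (j : ℕ) :
    IsFactorN (b j ++ (b (j+1) ++ (b (j+1+1) ++ b (j+1+1+1)))) t := by
  have h := sf9_join_factor ht 4 j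
  simpa [sf9_joinB] using h

lemma sf9_win5 {t : ℕ → Fin 3} {b : ℕ → List (Fin 3)} (ht : NConcat t b) (j : ℕ) :
    IsFactorN (b j ++ (b (j+1) ++ (b (j+1+1) ++ (b (j+1+1+1) ++ b (j+1+1+1+1))))) t := by
  have h := sf9_join_factor ht 5 j
  simpa [sf9_joinB] using h

lemma sf9_noSq {t : ℕ → Fin 3} (hg : GoodN t) {W : List (Fin 3)} (hW : IsFactorN W t)
    (x : List (Fin 3)) (hx : x ≠ []) (h : x ++ x <:+: W) : False :=
  hg.1 x hx (sf9_infix_factor hW h)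

lemma sf9_noForb {t : ℕ → Fin 3} (hg : GoodN t) {W : List (Fin 3)} (hW : IsFactorN W t)
    (q : List (Fin 3)) (hq : q ∈ Forbidden) (h : q <:+: W) : False :=
  hg.2 q hq (sf9_infix_factor hW h)

lemma sf9_L1 {t : ℕ → Fin 3} {b : ℕ → List (Fin 3)} (hb0 : b 0 = [0,1,0,2])
    (hb : ∀ i, 1 ≤ i → b i ∈ [[0,1], [0,1,2], [0,1,2,1], [0,2], [0,2,1,2]])
    (ht : NConcat t b) (hg : GoodN t) :
    ∀ i, b i = [0,1] → b (i+1) = [0,2] := by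
  intro i h0
  have hv := hb (i+1) (by omega)
  simp only [List.mem_cons, List.not_mem_nil, or_false] at hv
  rcases hv with h1|h1|h1|h1|h1
  · have hW := sf9_win2 ht i
    rw [h0, h1] at hW
    exact (sf9_noSq hg hW [0,1] (by decide) (by decide)).elim
  · have hW := sf9_win2 ht i
    rw [h0, h1] at hW
    exact (sf9_noSq hg hW [0,1] (by decide) (by decide)).elim
  · have hW := sf9_win2 ht i
    rw [h0, h1] at hW
    exact (sf9_noSq hg hW [0,1] (by decide) (by decide)).elim
  · exact h1
  · have hv := hb (i+1+1) (by omega)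
    simp only [List.mem_cons, List.not_mem_nil, or_false] at hv
    rcases hv with h2|h2|h2|h2|h2
    · have hW := sf9_win3 ht i
      rw [h0, h1, h2] at hW
      exact (sf9_noForb hg hW [1,0,2,1,2,0,1] (by decide) (by decide)).elim
    · have hW := sf9_win3 ht i
      rw [h0, h1, h2] at hW
      exact (sf9_noForb hg hW [1,0,2,1,2,0,1] (by decide) (by decide)).elim
    · have hW := sf9_win3 ht i
      rw [h0, h1, h2] at hW
      exact (sf9_noForb hg hW [1,0,2,1,2,0,1] (by decide) (by decide)).elim
    · have hv := hb (i+1+1+1) (by omega)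
      simp only [List.mem_cons, List.not_mem_nil, or_false] at hv
      rcases hv with h3|h3|h3|h3|h3
      · have hW := sf9_win4 ht i
        rw [h0, h1, h2, h3] at hW
        exact (sf9_noSq hg hW [2,0] (by decide) (by decide)).elim
      · have hW := sf9_win4 ht i
        rw [h0, h1, h2, h3] at hW
        exact (sf9_noSq hg hW [2,0] (by decide) (by decide)).elim
      · have hW := sf9_win4 ht i
        rw [h0, h1, h2, h3] at hW
        exact (sf9_noSq hg hW [2,0] (by decide) (by decide)).elim
      · have hW := sf9_win4 ht i
        rw [h0, h1, h2, h3] at hW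
        exact (sf9_noSq hg hW [2,0] (by decide) (by decide)).elim
      · have hW := sf9_win4 ht i
        rw [h0, h1, h2, h3] at hW
        exact (sf9_noSq hg hW [2,0] (by decide) (by decide)).elim
    · have hW := sf9_win3 ht i
      rw [h0, h1, h2] at hW
      exact (sf9_noSq hg hW [0,2,1,2] (by decide) (by decide)).elim

lemma sf9_L2 {t : ℕ → Fin 3} {b : ℕ → List (Fin 3)} (hb0 : b 0 = [0,1,0,2])
    (hb : ∀ i, 1 ≤ i → b i ∈ [[0,1], [0,1,2], [0,1,2,1], [0,2], [0,2,1,2]])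
    (ht : NConcat t b) (hg : GoodN t) :
    ∀ j, b (j+1) = [0,2] → b j = [0,1] := by
  intro j h1
  rcases Nat.eq_zero_or_pos j with rfl | hj
  · have hW := sf9_win2 ht 0
    rw [hb0, h1] at hW
    exact (sf9_noSq hg hW [0,2] (by decide) (by decide)).elim
  have hv := hb j hj
  simp only [List.mem_cons, List.not_mem_nil, or_false] at hv
  rcases hv with h0|h0|h0|h0|h0
  · exact h0
  · have hv := hb (j+1+1) (by omega)
    simp only [List.mem_cons, List.not_mem_nil, or_false] at hv
    rcases hv with h2|h2|h2|h2|h2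
    · have hW := sf9_win3 ht j
      rw [h0, h1, h2] at hW
      exact (sf9_noSq hg hW [2,0] (by decide) (by decide)).elim
    · have hW := sf9_win3 ht j
      rw [h0, h1, h2] at hW
      exact (sf9_noSq hg hW [2,0] (by decide) (by decide)).elim
    · have hW := sf9_win3 ht j
      rw [h0, h1, h2] at hW
      exact (sf9_noSq hg hW [2,0] (by decide) (by decide)).elim
    · have hW := sf9_win3 ht j
      rw [h0, h1, h2] at hW
      exact (sf9_noSq hg hW [2,0] (by decide) (by decide)).elim
    · have hW := sf9_win3 ht j
      rw [h0, h1, h2] at hW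
      exact (sf9_noSq hg hW [2,0] (by decide) (by decide)).elim
  · have hv := hb (j+1+1) (by omega)
    simp only [List.mem_cons, List.not_mem_nil, or_false] at hv
    rcases hv with h2|h2|h2|h2|h2
    · have hv := hb (j+1+1+1) (by omega)
      simp only [List.mem_cons, List.not_mem_nil, or_false] at hv
      rcases hv with h3|h3|h3|h3|h3
      · have hW := sf9_win4 ht j
        rw [h0, h1, h2, h3] at hW
        exact (sf9_noSq hg hW [0,1] (by decide) (by decide)).elim
      · have hW := sf9_win4 ht j
        rw [h0, h1, h2, h3] at hW
        exact (sf9_noSq hg hW [0,1] (by decide) (by decide)).elim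
      · have hW := sf9_win4 ht j
        rw [h0, h1, h2, h3] at hW
        exact (sf9_noSq hg hW [0,1] (by decide) (by decide)).elim
      · have hv := hb (j+1+1+1+1) (by omega)
        simp only [List.mem_cons, List.not_mem_nil, or_false] at hv
        rcases hv with h4|h4|h4|h4|h4
        · have hW := sf9_win5 ht j
          rw [h0, h1, h2, h3, h4] at hW
          exact (sf9_noSq hg hW [1,0,2,0] (by decide) (by decide)).elim
        · have hW := sf9_win5 ht j
          rw [h0, h1, h2, h3, h4] at hW
          exact (sf9_noSq hg hW [1,0,2,0] (by decide) (by decide)).elim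
        · have hW := sf9_win5 ht j
          rw [h0, h1, h2, h3, h4] at hW
          exact (sf9_noSq hg hW [1,0,2,0] (by decide) (by decide)).elim
        · have hW := sf9_win5 ht j
          rw [h0, h1, h2, h3, h4] at hW
          exact (sf9_noSq hg hW [1,0,2,0] (by decide) (by decide)).elim
        · have hW := sf9_win5 ht j
          rw [h0, h1, h2, h3, h4] at hW
          exact (sf9_noSq hg hW [1,0,2,0] (by decide) (by decide)).elim
      · obtain ⟨m, rfl⟩ : ∃ m, j = m + 1 := ⟨j - 1, by omega⟩
        rcases Nat.eq_zero_or_pos m with rfl | hm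
        · have hW := sf9_win5 ht 0
          rw [hb0, h0, h1, h2, h3] at hW
          exact (sf9_noForb hg hW [2,0,1,2,1,0,2] (by decide) (by decide)).elim
        have hv5 := hb m hm
        simp only [List.mem_cons, List.not_mem_nil, or_false] at hv5
        rcases hv5 with h5|h5|h5|h5|h5
        · have hW := sf9_win5 ht m
          rw [h5, h0, h1, h2, h3] at hW
          exact (sf9_noSq hg hW [0,1] (by decide) (by decide)).elim
        · have hW := sf9_win5 ht m
          rw [h5, h0, h1, h2, h3] at hW
          exact (sf9_noSq hg hW [0,1,2] (by decide) (by decide)).elim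
        · have hW := sf9_win5 ht m
          rw [h5, h0, h1, h2, h3] at hW
          exact (sf9_noSq hg hW [0,1,2,1] (by decide) (by decide)).elim
        · have hW := sf9_win5 ht m
          rw [h5, h0, h1, h2, h3] at hW
          exact (sf9_noForb hg hW [2,0,1,2,1,0,2] (by decide) (by decide)).elim
        · have hW := sf9_win5 ht m
          rw [h5, h0, h1, h2, h3] at hW
          exact (sf9_noForb hg hW [2,0,1,2,1,0,2] (by decide) (by decide)).elim
    · have hW := sf9_win3 ht j
      rw [h0, h1, h2] at hW
      exact (sf9_noForb hg hW [2,1,0,2,0,1,2] (by decide) (by decide)).elim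
    · have hW := sf9_win3 ht j
      rw [h0, h1, h2] at hW
      exact (sf9_noForb hg hW [2,1,0,2,0,1,2] (by decide) (by decide)).elim
    · have hW := sf9_win3 ht j
      rw [h0, h1, h2] at hW
      exact (sf9_noSq hg hW [0,2] (by decide) (by decide)).elim
    · have hW := sf9_win3 ht j
      rw [h0, h1, h2] at hW
      exact (sf9_noSq hg hW [0,2] (by decide) (by decide)).elim
  · have hW := sf9_win2 ht j
    rw [h0, h1] at hW
    exact (sf9_noSq hg hW [0,2] (by decide) (by decide)).elim
  · have hv := hb (j+1+1) (by omega)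
    simp only [List.mem_cons, List.not_mem_nil, or_false] at hv
    rcases hv with h2|h2|h2|h2|h2
    · have hW := sf9_win3 ht j
      rw [h0, h1, h2] at hW
      exact (sf9_noSq hg hW [2,0] (by decide) (by decide)).elim
    · have hW := sf9_win3 ht j
      rw [h0, h1, h2] at hW
      exact (sf9_noSq hg hW [2,0] (by decide) (by decide)).elim
    · have hW := sf9_win3 ht j
      rw [h0, h1, h2] at hW
      exact (sf9_noSq hg hW [2,0] (by decide) (by decide)).elim
    · have hW := sf9_win3 ht j
      rw [h0, h1, h2] at hW
      exact (sf9_noSq hg hW [2,0] (by decide) (by decide)).elim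
    · have hW := sf9_win3 ht j
      rw [h0, h1, h2] at hW
      exact (sf9_noSq hg hW [2,0] (by decide) (by decide)).elim


/-- Index of the start of the `n`-th regrouped block. -/
def sf9_q (b : ℕ → List (Fin 3)) : ℕ → ℕ
  | 0 => 0
  | n + 1 => sf9_q b n + (if b (sf9_q b n) = [0,1] then 2 else 1)


/-- A good ω-word of the form `1213·b₁·b₂⋯` with each `bᵢ ∈ {12,123,1232,13,1323}`
is an infinite concatenation of blocks from `{1213, 123, 1232, 1323}`. -/
theorem stmt_9 (b : ℕ → List (Fin 3)) (hb0 : b 0 = [0,1,0,2])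
    (hb : ∀ i, 1 ≤ i → b i ∈ [[0,1], [0,1,2], [0,1,2,1], [0,2], [0,2,1,2]])
    (t : ℕ → Fin 3) (ht : NConcat t b) (hg : GoodN t) :
    ∃ c : ℕ → List (Fin 3),
      (∀ i, c i ∈ [[0,1,0,2], [0,1,2], [0,1,2,1], [0,2,1,2]]) ∧ NConcat t c := by
  have L1 := sf9_L1 hb0 hb ht hg
  have L2 := sf9_L2 hb0 hb ht hg
  obtain ⟨p, hp0, hplen, hpfac⟩ := ht
  have hqs : ∀ n, sf9_q b (n+1) = sf9_q b n + (if b (sf9_q b n) = [0,1] then 2 else 1) :=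
    fun n => rfl
  have hq0 : sf9_q b 0 = 0 := rfl
  have hQ : ∀ n, b (sf9_q b n) ≠ [0,2] := by
    intro n
    induction n with
    | zero => rw [hq0, hb0]; decide
    | succ n ih =>
      rw [hqs n]
      by_cases h : b (sf9_q b n) = [0,1]
      · rw [if_pos h]
        intro hc
        have h2 : b (sf9_q b n + 1 + 1) = [0,2] := by
          have e : sf9_q b n + 2 = sf9_q b n + 1 + 1 := by omega
          rwa [e] at hc
        have e := (L1 (sf9_q b n) h).symm.trans (L2 (sf9_q b n + 1) h2)
        exact absurd e (by decide)
      · rw [if_neg h]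
        intro hc
        exact h (L2 (sf9_q b n) hc)
  refine ⟨fun n => if b (sf9_q b n) = [0,1] then [0,1,0,2] else b (sf9_q b n), ?_, ?_⟩
  · intro n
    by_cases h : b (sf9_q b n) = [0,1]
    · simp only [if_pos h]
      simp
    · simp only [if_neg h]
      rcases Nat.eq_zero_or_pos (sf9_q b n) with hz | hpos
      · rw [hz, hb0]; simp
      · have hv := hb (sf9_q b n) hpos
        simp only [List.mem_cons, List.not_mem_nil, or_false] at hv
        rcases hv with e|e|e|e|e
        · exact absurd e h
        · rw [e]; simp
        · rw [e]; simp
        · exact absurd e (hQ n)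
        · rw [e]; simp
  · refine ⟨fun n => p (sf9_q b n), by show p (sf9_q b 0) = 0; rw [hq0, hp0], ?_, ?_⟩
    · intro n
      by_cases h : b (sf9_q b n) = [0,1]
      · have h2 := L1 (sf9_q b n) h
        simp only [hqs n, if_pos h]
        have e0 : sf9_q b n + 2 = sf9_q b n + 1 + 1 := by omega
        rw [e0, hplen (sf9_q b n + 1), hplen (sf9_q b n), h, h2]
        simp
      · simp only [hqs n, if_neg h]
        rw [hplen (sf9_q b n)]
    · intro n
      by_cases h : b (sf9_q b n) = [0,1]
      · simp only [if_pos h]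
        have h2 := L1 (sf9_q b n) h
        have e1 : ([0,1] : List (Fin 3)) = factorAtN t (p (sf9_q b n)) 2 := by
          have e := hpfac (sf9_q b n); rw [h] at e; exact e
        have e2 : ([0,2] : List (Fin 3)) = factorAtN t (p (sf9_q b n) + 2) 2 := by
          have e := hpfac (sf9_q b n + 1)
          rw [h2, hplen (sf9_q b n), h] at e
          exact e
        show ([0,1,0,2] : List (Fin 3)) = factorAtN t (p (sf9_q b n)) (2+2)
        rw [sf9_factorAtN_append, ← e1, ← e2]
        rfl
      · simp only [if_neg h]
        exact hpfac (sf9_q b n)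
end

section
/- Let t be a good ω-word over S = {1,2,3} of the form t = 1213·b₁·b₂·b₃·⋯ where each bᵢ ∈ {12, 123, 1232, 13, 1323}. Then neither 132313 nor 21232 is a factor of t. -/
/-- For a good ω-word `t` of the form `1213·b₁·b₂⋯` with each
`bᵢ ∈ {12,123,1232,13,1323}`, neither `132313` nor `21232` is a factor of `t`. -/
theorem stmt_10 (b : ℕ → List (Fin 3)) (hb0 : b 0 = [0,1,0,2])
    (hb : ∀ i, 1 ≤ i → b i ∈ [[0,1], [0,1,2], [0,1,2,1], [0,2], [0,2,1,2]])
    (t : ℕ → Fin 3) (ht : NConcat t b) (hg : GoodN t) :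
    ¬ IsFactorN [0,2,1,2,0,2] t ∧ ¬ IsFactorN [1,0,1,2,1] t := by
  obtain ⟨p, hp0, hps, hpf⟩ := ht
  have hblock : ∀ i, (b i)[0]? = some 0 ∧ 2 ≤ (b i).length := by
    intro i
    cases i with
    | zero => rw [hb0]; exact ⟨rfl, by norm_num⟩
    | succ j =>
      have h := hb (j+1) (by omega)
      simp only [List.mem_cons, List.not_mem_nil, or_false] at h
      rcases h with h|h|h|h|h <;> rw [h] <;> exact ⟨rfl, by norm_num⟩
  have tval : ∀ i k, k < (b i).length → (b i)[k]? = some (t (p i + k)) := by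
    intro i k hk
    conv_lhs => rw [hpf i]
    simp [factorAtN, hk]
  have hlet : ∀ (i : ℕ) (L : List (Fin 3)), b i = L → ∀ (k : ℕ) (c : Fin 3),
      L[k]? = some c → ∀ n, n = p i + k → t n = c := by
    intro i L hL k c hc n hn
    have hk : k < (b i).length := by
      rw [hL]; exact (List.getElem?_eq_some_iff.mp hc).1
    have h2 := tval i k hk
    rw [hL, hc] at h2
    rw [hn]
    exact (Option.some.injEq _ _ ▸ h2).symm
  have hstart : ∀ i, t (p i) = 0 := fun i =>
    hlet i (b i) rfl 0 0 (hblock i).1 (p i) (by omega)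
  have hmono : ∀ i, p i + 2 ≤ p (i+1) := by
    intro i; have := (hblock i).2; rw [hps i]; omega
  have hcov : ∀ n, ∃ i, p i ≤ n ∧ n < p (i+1) := by
    intro n
    induction n with
    | zero => exact ⟨0, by omega, by have := hmono 0; omega⟩
    | succ n ih =>
      obtain ⟨i, h1, h2⟩ := ih
      by_cases h : n + 1 < p (i+1)
      · exact ⟨i, by omega, h⟩
      · exact ⟨i+1, by omega, by have := hmono (i+1); omega⟩
  have hcases : ∀ i, b i = [0,1,0,2] ∨ b i = [0,1] ∨ b i = [0,1,2] ∨
      b i = [0,1,2,1] ∨ b i = [0,2] ∨ b i = [0,2,1,2] := by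
    intro i
    cases i with
    | zero => exact Or.inl hb0
    | succ j =>
      right
      have h := hb (j+1) (by omega)
      simpa using h
  constructor
  · rintro ⟨m, hm⟩
    simp [factorAtN, List.range_succ] at hm
    obtain ⟨e0,e1,e2,e3,e4,e5⟩ := hm
    obtain ⟨i, hi1, hi2⟩ := hcov m
    obtain ⟨k, hm2, hk⟩ : ∃ k, m = p i + k ∧ k < (b i).length :=
      ⟨m - p i, by omega, by have := hps i; omega⟩
    rcases hcases i with hbi|hbi|hbi|hbi|hbi|hbi <;>
      [(have hq : p (i+1) = p i + 4 := by rw [hps i, hbi]; rfl);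
       (have hq : p (i+1) = p i + 2 := by rw [hps i, hbi]; rfl);
       (have hq : p (i+1) = p i + 3 := by rw [hps i, hbi]; rfl);
       (have hq : p (i+1) = p i + 4 := by rw [hps i, hbi]; rfl);
       (have hq : p (i+1) = p i + 2 := by rw [hps i, hbi]; rfl);
       (have hq : p (i+1) = p i + 4 := by rw [hps i, hbi]; rfl)] <;>
      rw [hbi] at hk <;> simp only [List.length_cons, List.length_nil] at hk <;>
      [skip; skip; skip; skip; skip; skip]
    -- case [0,1,0,2]
    · interval_cases k
      · exact absurd (hlet i _ hbi 1 1 (by decide) (m+1) (by omega)) (by rw [← e1]; decide)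
      · exact absurd (hlet i _ hbi 1 1 (by decide) m (by omega)) (by rw [← e0]; decide)
      · exact absurd (show t (m+2) = 0 by
          rw [show m+2 = p (i+1) from by omega]; exact hstart (i+1)) (by rw [← e2]; decide)
      · exact absurd (hlet i _ hbi 3 2 (by decide) m (by omega)) (by rw [← e0]; decide)
    -- [0,1]
    · interval_cases k
      · exact absurd (hlet i _ hbi 1 1 (by decide) (m+1) (by omega)) (by rw [← e1]; decide)
      · exact absurd (hlet i _ hbi 1 1 (by decide) m (by omega)) (by rw [← e0]; decide)
    -- [0,1,2]
    · interval_cases k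
      · exact absurd (hlet i _ hbi 1 1 (by decide) (m+1) (by omega)) (by rw [← e1]; decide)
      · exact absurd (hlet i _ hbi 1 1 (by decide) m (by omega)) (by rw [← e0]; decide)
      · exact absurd (hlet i _ hbi 2 2 (by decide) m (by omega)) (by rw [← e0]; decide)
    -- [0,1,2,1]
    · interval_cases k
      · exact absurd (hlet i _ hbi 1 1 (by decide) (m+1) (by omega)) (by rw [← e1]; decide)
      · exact absurd (hlet i _ hbi 1 1 (by decide) m (by omega)) (by rw [← e0]; decide)
      · exact absurd (hlet i _ hbi 2 2 (by decide) m (by omega)) (by rw [← e0]; decide)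
      · exact absurd (hlet i _ hbi 3 1 (by decide) m (by omega)) (by rw [← e0]; decide)
    -- [0,2]
    · interval_cases k
      · exact absurd (show t (m+2) = 0 by
          rw [show m+2 = p (i+1) from by omega]; exact hstart (i+1)) (by rw [← e2]; decide)
      · exact absurd (hlet i _ hbi 1 2 (by decide) m (by omega)) (by rw [← e0]; decide)
    -- [0,2,1,2]
    · interval_cases k
      · -- subcases on b (i+1)
        have hbj := hb (i+1) (by omega)
        simp only [List.mem_cons, List.not_mem_nil, or_false] at hbj
        rcases hbj with hbj|hbj|hbj|hbj|hbj
        · exact absurd (hlet (i+1) _ hbj 1 1 (by decide) (m+5) (by omega)) (by rw [← e5]; decide)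
        · exact absurd (hlet (i+1) _ hbj 1 1 (by decide) (m+5) (by omega)) (by rw [← e5]; decide)
        · exact absurd (hlet (i+1) _ hbj 1 1 (by decide) (m+5) (by omega)) (by rw [← e5]; decide)
        · -- b(i+1) = [0,2] : square [2,0][2,0] at m+3
          have hq2 : p (i+2) = p (i+1) + 2 := by rw [hps (i+1), hbj]; rfl
          have f6 : t (m+6) = 0 := by
            rw [show m+6 = p (i+2) from by omega]; exact hstart (i+2)
          refine hg.1 [2,0] (by simp) ⟨m+3, ?_⟩
          simp [factorAtN, List.range_succ]
          exact ⟨e3, e4, e5, f6.symm⟩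
        · -- b(i+1) = [0,2,1,2] : square [0,2,1,2]² at m
          have f6 : t (m+6) = 1 := hlet (i+1) _ hbj 2 1 (by decide) (m+6) (by omega)
          have f7 : t (m+7) = 2 := hlet (i+1) _ hbj 3 2 (by decide) (m+7) (by omega)
          refine hg.1 [0,2,1,2] (by simp) ⟨m, ?_⟩
          simp [factorAtN, List.range_succ]
          exact ⟨e0, e1, e2, e3, e4, e5, f6.symm, f7.symm⟩
      · exact absurd (hlet i _ hbi 1 2 (by decide) m (by omega)) (by rw [← e0]; decide)
      · exact absurd (hlet i _ hbi 2 1 (by decide) m (by omega)) (by rw [← e0]; decide)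
      · exact absurd (hlet i _ hbi 3 2 (by decide) m (by omega)) (by rw [← e0]; decide)
  · rintro ⟨m, hm⟩
    simp [factorAtN, List.range_succ] at hm
    obtain ⟨e0,e1,e2,e3,e4⟩ := hm
    obtain ⟨i, hi1, hi2⟩ := hcov m
    obtain ⟨k, hm2, hk⟩ : ∃ k, m = p i + k ∧ k < (b i).length :=
      ⟨m - p i, by omega, by have := hps i; omega⟩
    rcases hcases i with hbi|hbi|hbi|hbi|hbi|hbi <;>
      [(have hq : p (i+1) = p i + 4 := by rw [hps i, hbi]; rfl);
       (have hq : p (i+1) = p i + 2 := by rw [hps i, hbi]; rfl);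
       (have hq : p (i+1) = p i + 3 := by rw [hps i, hbi]; rfl);
       (have hq : p (i+1) = p i + 4 := by rw [hps i, hbi]; rfl);
       (have hq : p (i+1) = p i + 2 := by rw [hps i, hbi]; rfl);
       (have hq : p (i+1) = p i + 4 := by rw [hps i, hbi]; rfl)] <;>
      rw [hbi] at hk <;> simp only [List.length_cons, List.length_nil] at hk <;>
      [skip; skip; skip; skip; skip; skip]
    -- [0,1,0,2]
    · interval_cases k
      · exact absurd (hlet i _ hbi 0 0 (by decide) m (by omega)) (by rw [← e0]; decide)
      · exact absurd (hlet i _ hbi 3 2 (by decide) (m+2) (by omega)) (by rw [← e2]; decide)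
      · exact absurd (hlet i _ hbi 2 0 (by decide) m (by omega)) (by rw [← e0]; decide)
      · exact absurd (hlet i _ hbi 3 2 (by decide) m (by omega)) (by rw [← e0]; decide)
    -- [0,1]
    · interval_cases k
      · exact absurd (hlet i _ hbi 0 0 (by decide) m (by omega)) (by rw [← e0]; decide)
      · -- square [0,1][0,1] at p i
        have g0 : t (p i) = 0 := hlet i _ hbi 0 0 (by decide) (p i) (by omega)
        have g1 : t (p i + 1) = 1 := hlet i _ hbi 1 1 (by decide) (p i + 1) (by omega)
        refine hg.1 [0,1] (by simp) ⟨p i, ?_⟩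
        simp [factorAtN, List.range_succ]
        refine ⟨g0.symm, g1.symm, ?_, ?_⟩
        · rw [show p i + 2 = m + 1 from by omega]; exact e1
        · rw [show p i + 3 = m + 2 from by omega]; exact e2
    -- [0,1,2]
    · interval_cases k
      · exact absurd (hlet i _ hbi 0 0 (by decide) m (by omega)) (by rw [← e0]; decide)
      · exact absurd (hlet i _ hbi 2 2 (by decide) (m+1) (by omega)) (by rw [← e1]; decide)
      · exact absurd (hlet i _ hbi 2 2 (by decide) m (by omega)) (by rw [← e0]; decide)
    -- [0,1,2,1]
    · interval_cases k
      · exact absurd (hlet i _ hbi 0 0 (by decide) m (by omega)) (by rw [← e0]; decide)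
      · exact absurd (hlet i _ hbi 2 2 (by decide) (m+1) (by omega)) (by rw [← e1]; decide)
      · exact absurd (hlet i _ hbi 2 2 (by decide) m (by omega)) (by rw [← e0]; decide)
      · -- k = 3
        have hbj := hb (i+1) (by omega)
        simp only [List.mem_cons, List.not_mem_nil, or_false] at hbj
        rcases hbj with hbj|hbj|hbj|hbj|hbj
        · -- [0,1]
          have hq2 : p (i+2) = p (i+1) + 2 := by rw [hps (i+1), hbj]; rfl
          exact absurd (show t (m+3) = 0 by
            rw [show m+3 = p (i+2) from by omega]; exact hstart (i+2)) (by rw [← e3]; decide)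
        · -- [0,1,2]
          have hq2 : p (i+2) = p (i+1) + 3 := by rw [hps (i+1), hbj]; rfl
          exact absurd (show t (m+4) = 0 by
            rw [show m+4 = p (i+2) from by omega]; exact hstart (i+2)) (by rw [← e4]; decide)
        · -- [0,1,2,1] : square [0,1,2,1]² at p i
          have g0 : t (p i) = 0 := hlet i _ hbi 0 0 (by decide) (p i) (by omega)
          have g1 : t (p i + 1) = 1 := hlet i _ hbi 1 1 (by decide) (p i + 1) (by omega)
          have g2 : t (p i + 2) = 2 := hlet i _ hbi 2 2 (by decide) (p i + 2) (by omega)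
          have g3 : t (p i + 3) = 1 := hlet i _ hbi 3 1 (by decide) (p i + 3) (by omega)
          refine hg.1 [0,1,2,1] (by simp) ⟨p i, ?_⟩
          simp [factorAtN, List.range_succ]
          refine ⟨g0.symm, g1.symm, g2.symm, g3.symm, ?_, ?_, ?_, ?_⟩
          · rw [show p i + 4 = m + 1 from by omega]; exact e1
          · rw [show p i + 5 = m + 2 from by omega]; exact e2
          · rw [show p i + 6 = m + 3 from by omega]; exact e3
          · rw [show p i + 7 = m + 4 from by omega]; exact e4
        · exact absurd (hlet (i+1) _ hbj 1 2 (by decide) (m+2) (by omega)) (by rw [← e2]; decide)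
        · exact absurd (hlet (i+1) _ hbj 1 2 (by decide) (m+2) (by omega)) (by rw [← e2]; decide)
    -- [0,2]
    · interval_cases k
      · exact absurd (hlet i _ hbi 1 2 (by decide) (m+1) (by omega)) (by rw [← e1]; decide)
      · exact absurd (hlet i _ hbi 1 2 (by decide) m (by omega)) (by rw [← e0]; decide)
    -- [0,2,1,2]
    · interval_cases k
      · exact absurd (hlet i _ hbi 0 0 (by decide) m (by omega)) (by rw [← e0]; decide)
      · exact absurd (hlet i _ hbi 1 2 (by decide) m (by omega)) (by rw [← e0]; decide)
      · exact absurd (hlet i _ hbi 3 2 (by decide) (m+1) (by omega)) (by rw [← e1]; decide)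
      · exact absurd (hlet i _ hbi 3 2 (by decide) m (by omega)) (by rw [← e0]; decide)
end

section
/- Let t be a good ω-word over S = {1,2,3} of the form t = b₀·b₁·b₂·⋯ where b₀ = 1213 and each bᵢ ∈ {12, 123, 1232, 13, 1323} for i ≥ 1. If bᵢ = 12 for some i ≥ 1, then b_{i+1} = 13. -/
/-- For a good ω-word `t = b₀·b₁·b₂⋯` with `b₀ = 1213` and each
`bᵢ ∈ {12,123,1232,13,1323}` for `i ≥ 1`: if `bᵢ = 12` for some `i ≥ 1`,
then `b_{i+1} = 13`. -/
theorem stmt_11 (b : ℕ → List (Fin 3)) (hb0 : b 0 = [0,1,0,2])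
    (hb : ∀ i, 1 ≤ i → b i ∈ [[0,1], [0,1,2], [0,1,2,1], [0,2], [0,2,1,2]])
    (t : ℕ → Fin 3) (ht : NConcat t b) (hg : GoodN t)
    (i : ℕ) (hi : 1 ≤ i) (h12 : b i = [0,1]) :
    b (i + 1) = [0,2] := by
  obtain ⟨p, hp0, hplen, hpfac⟩ := ht
  obtain ⟨hsf, hfg⟩ := hg
  have key : ∀ j k, k < (b j).length → (b j)[k]? = some (t (p j + k)) := by
    intro j k hk
    conv_lhs => rw [hpfac j]
    simp [factorAtN, hk]
  have tv : ∀ j k (x : Fin 3), (b j)[k]? = some x → t (p j + k) = x := by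
    intro j k x hx
    have hk : k < (b j).length := by
      by_contra h
      rw [List.getElem?_eq_none (by omega)] at hx; simp at hx
    have h2 := key j k hk
    rw [hx] at h2
    exact (Option.some_inj.mp h2).symm
  have hfirst : ∀ j, t (p j) = 0 := by
    intro j
    have h0 : (b j)[0]? = some 0 := by
      match j with
      | 0 => rw [hb0]; rfl
      | j+1 =>
        have hm := hb (j+1) (by omega)
        simp only [List.mem_cons, List.mem_singleton, List.mem_nil_iff, or_false] at hm
        rcases hm with h|h|h|h|h <;> rw [h] <;> rfl
    simpa using tv j 0 0 h0
  have exp4 : ∀ m, factorAtN t m 4 = [t m, t (m+1), t (m+2), t (m+3)] := by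
    intro m; simp [factorAtN, List.range_succ]
  have exp7 : ∀ m, factorAtN t m 7 =
      [t m, t (m+1), t (m+2), t (m+3), t (m+4), t (m+5), t (m+6)] := by
    intro m; simp [factorAtN, List.range_succ]
  have exp8 : ∀ m, factorAtN t m 8 =
      [t m, t (m+1), t (m+2), t (m+3), t (m+4), t (m+5), t (m+6), t (m+7)] := by
    intro m; simp [factorAtN, List.range_succ]
  set n := p i with hn
  have hpi1 : p (i+1) = n + 2 := by rw [hplen, h12]; rfl
  have t0 : t n = 0 := by simpa using tv i 0 0 (by rw [h12]; rfl)
  have t1 : t (n+1) = 1 := by simpa using tv i 1 1 (by rw [h12]; rfl)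
  have hm1 := hb (i+1) (by omega)
  simp only [List.mem_cons, List.mem_singleton, List.mem_nil_iff, or_false] at hm1
  -- helper: if b (i+1) starts with 0,1 we get the square 0101
  have sq01 : (b (i+1))[1]? = some 1 → False := by
    intro h1
    have t3 : t (n+3) = 1 := by
      have := tv (i+1) 1 1 h1
      rwa [hpi1, show n + 2 + 1 = n + 3 by omega] at this
    have t2 : t (n+2) = 0 := by
      have := hfirst (i+1); rwa [hpi1] at this
    exact hsf [0,1] (by simp) ⟨n, by
      show ([0,1,0,1] : List (Fin 3)) = factorAtN t n 4
      rw [exp4, t0, t1, t2, t3]⟩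
  rcases hm1 with h|h|h|h|h
  · exact absurd (by rw [h]; rfl) (fun h1 => sq01 h1)
  · exact absurd (by rw [h]; rfl) (fun h1 => sq01 h1)
  · exact absurd (by rw [h]; rfl) (fun h1 => sq01 h1)
  · exact h
  · -- b (i+1) = [0,2,1,2]
    exfalso
    have hpi2 : p (i+2) = n + 6 := by rw [hplen, h, hpi1]; rfl
    have t2 : t (n+2) = 0 := by
      simpa [hpi1] using tv (i+1) 0 0 (by rw [h]; rfl)
    have t3 : t (n+3) = 2 := by
      have := tv (i+1) 1 2 (by rw [h]; rfl)
      rwa [hpi1, show n + 2 + 1 = n + 3 by omega] at this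
    have t4 : t (n+4) = 1 := by
      have := tv (i+1) 2 1 (by rw [h]; rfl)
      rwa [hpi1, show n + 2 + 2 = n + 4 by omega] at this
    have t5 : t (n+5) = 2 := by
      have := tv (i+1) 3 2 (by rw [h]; rfl)
      rwa [hpi1, show n + 2 + 3 = n + 5 by omega] at this
    have t6 : t (n+6) = 0 := by
      have := hfirst (i+2); rwa [hpi2] at this
    -- case on b (i+2)
    have hm2 := hb (i+2) (by omega)
    simp only [List.mem_cons, List.mem_singleton, List.mem_nil_iff, or_false] at hm2
    -- helper: b(i+2) second letter 1 ⇒ forbidden factor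
    have fb1 : (b (i+2))[1]? = some 1 → False := by
      intro h1
      have t7 : t (n+7) = 1 := by
        have := tv (i+2) 1 1 h1
        rwa [hpi2, show n + 6 + 1 = n + 7 by omega] at this
      exact hfg [1,0,2,1,2,0,1] (by simp [Forbidden]) ⟨n+1, by
        show ([1,0,2,1,2,0,1] : List (Fin 3)) = factorAtN t (n+1) 7
        rw [exp7]
        rw [show n+1+1 = n+2 by omega, show n+1+2 = n+3 by omega,
          show n+1+3 = n+4 by omega, show n+1+4 = n+5 by omega,
          show n+1+5 = n+6 by omega, show n+1+6 = n+7 by omega,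
          t1, t2, t3, t4, t5, t6, t7]⟩
    rcases hm2 with h2|h2|h2|h2|h2
    · exact fb1 (by rw [h2]; rfl)
    · exact fb1 (by rw [h2]; rfl)
    · exact fb1 (by rw [h2]; rfl)
    · -- b (i+2) = [0,2] : square 2020 at n+5
      have hpi3 : p (i+3) = n + 8 := by rw [hplen, h2, hpi2]; rfl
      have t7 : t (n+7) = 2 := by
        have := tv (i+2) 1 2 (by rw [h2]; rfl)
        rwa [hpi2, show n + 6 + 1 = n + 7 by omega] at this
      have t8 : t (n+8) = 0 := by
        have := hfirst (i+3); rwa [hpi3] at this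
      exact hsf [2,0] (by simp) ⟨n+5, by
        show ([2,0,2,0] : List (Fin 3)) = factorAtN t (n+5) 4
        rw [exp4]
        rw [show n+5+1 = n+6 by omega, show n+5+2 = n+7 by omega,
          show n+5+3 = n+8 by omega, t5, t6, t7, t8]⟩
    · -- b (i+2) = [0,2,1,2] : square (0212)(0212) at n+2
      have t7 : t (n+7) = 2 := by
        have := tv (i+2) 1 2 (by rw [h2]; rfl)
        rwa [hpi2, show n + 6 + 1 = n + 7 by omega] at this
      have t8 : t (n+8) = 1 := by
        have := tv (i+2) 2 1 (by rw [h2]; rfl)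
        rwa [hpi2, show n + 6 + 2 = n + 8 by omega] at this
      have t9 : t (n+9) = 2 := by
        have := tv (i+2) 3 2 (by rw [h2]; rfl)
        rwa [hpi2, show n + 6 + 3 = n + 9 by omega] at this
      exact hsf [0,2,1,2] (by simp) ⟨n+2, by
        show ([0,2,1,2,0,2,1,2] : List (Fin 3)) = factorAtN t (n+2) 8
        rw [exp8]
        rw [show n+2+1 = n+3 by omega, show n+2+2 = n+4 by omega,
          show n+2+3 = n+5 by omega, show n+2+4 = n+6 by omega,
          show n+2+5 = n+7 by omega, show n+2+6 = n+8 by omega,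
          show n+2+7 = n+9 by omega, t2, t3, t4, t5, t6, t7, t8, t9]⟩
end

section
/- Every square-free ℤ-word over S = {1,2,3} can be written as a bi-infinite concatenation of blocks from {12, 123, 1232, 13, 132, 1323}. -/
lemma fz2 {α : Type*} (w : ℤ → α) (i : ℤ) : factorAtZ w i 2 = [w i, w (i+1)] := by
  simp [factorAtZ, List.range_succ]

lemma fz3 {α : Type*} (w : ℤ → α) (i : ℤ) : factorAtZ w i 3 = [w i, w (i+1), w (i+2)] := by
  simp [factorAtZ, List.range_succ]

lemma fz4 {α : Type*} (w : ℤ → α) (i : ℤ) :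
    factorAtZ w i 4 = [w i, w (i+1), w (i+2), w (i+3)] := by
  simp [factorAtZ, List.range_succ]

lemma adj' {w : ℤ → Fin 3} (hw : SquareFreeZ w) (j : ℤ) : w j ≠ w (j+1) := by
  intro h
  refine hw [w j] (by simp) ⟨j, ?_⟩
  show _ = factorAtZ w j 2
  rw [fz2, ← h]; rfl

lemma sq2' {w : ℤ → Fin 3} (hw : SquareFreeZ w) (j : ℤ)
    (h1 : w j = w (j+2)) (h2 : w (j+1) = w (j+3)) : False := by
  refine hw [w j, w (j+1)] (by simp) ⟨j, ?_⟩
  show _ = factorAtZ w j 4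
  rw [fz4, ← h1, ← h2]; rfl

lemma L1 : ∀ x : Fin 3, x ≠ 0 → x = 1 ∨ x = 2 := by decide

set_option synthInstance.maxSize 400 in
lemma L2 : ∀ x y z : Fin 3, x ≠ 0 → y ≠ 0 → z ≠ 0 → x ≠ y → y ≠ z → x = z := by decide

lemma win {w : ℤ → Fin 3} (hw : SquareFreeZ w) (i : ℤ) :
    ∃ k : ℕ, k ≤ 3 ∧ w (i + k) = 0 := by
  by_contra h
  push_neg at h
  have n0 : w i ≠ 0 := by have := h 0 (by norm_num); norm_num at this; exact this
  have n1 : w (i+1) ≠ 0 := by have := h 1 (by norm_num); norm_num at this; exact this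
  have n2 : w (i+2) ≠ 0 := by have := h 2 (by norm_num); norm_num at this; exact this
  have n3 : w (i+3) ≠ 0 := by have := h 3 (by norm_num); norm_num at this; exact this
  have d1 := adj' hw i
  have d2 : w (i+1) ≠ w (i+2) := by
    have := adj' hw (i+1); rwa [show i+1+1 = i+2 by ring] at this
  have d3 : w (i+2) ≠ w (i+3) := by
    have := adj' hw (i+2); rwa [show i+2+1 = i+3 by ring] at this
  exact sq2' hw i (L2 _ _ _ n0 n1 n2 d1 d2)
    (by have := L2 _ _ _ n1 n2 n3 d2 d3
        exact this)

lemma winE {w : ℤ → Fin 3} (hw : SquareFreeZ w) (i : ℤ) :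
    ∃ k : ℕ, w (i + k) = 0 := by
  obtain ⟨k, _, hk⟩ := win hw i; exact ⟨k, hk⟩

lemma prevE {w : ℤ → Fin 3} (hw : SquareFreeZ w) (i : ℤ) :
    ∃ k : ℕ, 0 < k ∧ w (i - k) = 0 := by
  obtain ⟨k, hk3, hk⟩ := win hw (i - 4)
  refine ⟨4 - k, by omega, ?_⟩
  have e : i - ((4 - k : ℕ) : ℤ) = i - 4 + k := by
    push_cast [Nat.cast_sub (by omega : k ≤ 4)]; ring
  rw [e]; exact hk

noncomputable def nzP (w : ℤ → Fin 3) (hex : ∀ i : ℤ, ∃ k : ℕ, w (i + k) = 0) (i : ℤ) : ℤ :=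
  i + Nat.find (hex i)

lemma nzP_zero (w : ℤ → Fin 3) (hex : ∀ i : ℤ, ∃ k : ℕ, w (i + k) = 0) (i : ℤ) : w (nzP w hex i) = 0 := Nat.find_spec (hex i)

lemma nzP_ge (w : ℤ → Fin 3) (hex : ∀ i : ℤ, ∃ k : ℕ, w (i + k) = 0) (i : ℤ) : i ≤ nzP w hex i := by
  have : (0:ℤ) ≤ (Nat.find (hex i) : ℤ) := Int.natCast_nonneg _
  unfold nzP; omega

lemma nzP_min (w : ℤ → Fin 3) (hex : ∀ i : ℤ, ∃ k : ℕ, w (i + k) = 0) (i j : ℤ) (h1 : i ≤ j) (h2 : j < nzP w hex i) : w j ≠ 0 := by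
  have hm : (j - i).toNat < Nat.find (hex i) := by unfold nzP at h2; omega
  have := Nat.find_min (hex i) hm
  rwa [show i + ((j - i).toNat : ℤ) = j by omega] at this

noncomputable def pzP (w : ℤ → Fin 3) (hpr : ∀ i : ℤ, ∃ k : ℕ, 0 < k ∧ w (i - k) = 0)
    (i : ℤ) : ℤ :=
  i - Nat.find (hpr i)

lemma pzP_zero (w : ℤ → Fin 3) (hpr : ∀ i : ℤ, ∃ k : ℕ, 0 < k ∧ w (i - k) = 0) (i : ℤ) : w (pzP w hpr i) = 0 := (Nat.find_spec (hpr i)).2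

lemma pzP_lt (w : ℤ → Fin 3) (hpr : ∀ i : ℤ, ∃ k : ℕ, 0 < k ∧ w (i - k) = 0) (i : ℤ) : pzP w hpr i < i := by
  have h0 := (Nat.find_spec (hpr i)).1
  have : (0:ℤ) < (Nat.find (hpr i) : ℤ) := by exact_mod_cast h0
  unfold pzP; omega

lemma pzP_min (w : ℤ → Fin 3) (hpr : ∀ i : ℤ, ∃ k : ℕ, 0 < k ∧ w (i - k) = 0) (i j : ℤ) (h1 : pzP w hpr i < j) (h2 : j < i) : w j ≠ 0 := by
  have hm : (i - j).toNat < Nat.find (hpr i) := by unfold pzP at h1; omega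
  have := Nat.find_min (hpr i) hm
  rw [not_and] at this
  have h3 := this (by omega)
  rwa [show i - ((i - j).toNat : ℤ) = j by omega] at h3

noncomputable def qseq (w : ℤ → Fin 3) (hex : ∀ i : ℤ, ∃ k : ℕ, w (i + k) = 0) : ℕ → ℤ
  | 0 => nzP w hex 0
  | n+1 => nzP w hex (qseq w hex n + 1)

noncomputable def rseq (w : ℤ → Fin 3) (hex : ∀ i : ℤ, ∃ k : ℕ, w (i + k) = 0)
    (hpr : ∀ i : ℤ, ∃ k : ℕ, 0 < k ∧ w (i - k) = 0) : ℕ → ℤ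
  | 0 => nzP w hex 0
  | n+1 => pzP w hpr (rseq w hex hpr n)

noncomputable def pfun (w : ℤ → Fin 3) (hex : ∀ i : ℤ, ∃ k : ℕ, w (i + k) = 0)
    (hpr : ∀ i : ℤ, ∃ k : ℕ, 0 < k ∧ w (i - k) = 0) (i : ℤ) : ℤ :=
  if 0 ≤ i then qseq w hex i.toNat else rseq w hex hpr (-i).toNat

lemma qseq_zero (w : ℤ → Fin 3) (hex : ∀ i : ℤ, ∃ k : ℕ, w (i + k) = 0) (n : ℕ) : w (qseq w hex n) = 0 := by
  cases n with
  | zero => exact nzP_zero w hex 0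
  | succ n => exact nzP_zero w hex _

lemma rseq_zero (w : ℤ → Fin 3) (hex : ∀ i : ℤ, ∃ k : ℕ, w (i + k) = 0) (hpr : ∀ i : ℤ, ∃ k : ℕ, 0 < k ∧ w (i - k) = 0) (n : ℕ) : w (rseq w hex hpr n) = 0 := by
  cases n with
  | zero => exact nzP_zero w hex 0
  | succ n => exact pzP_zero w hpr _

lemma pfun_zero (w : ℤ → Fin 3) (hex : ∀ i : ℤ, ∃ k : ℕ, w (i + k) = 0) (hpr : ∀ i : ℤ, ∃ k : ℕ, 0 < k ∧ w (i - k) = 0) (i : ℤ) : w (pfun w hex hpr i) = 0 := by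
  unfold pfun; split
  · exact qseq_zero w hex _
  · exact rseq_zero w hex hpr _

lemma pfun_step (w : ℤ → Fin 3) (hex : ∀ i : ℤ, ∃ k : ℕ, w (i + k) = 0) (hpr : ∀ i : ℤ, ∃ k : ℕ, 0 < k ∧ w (i - k) = 0) (i : ℤ) :
    pfun w hex hpr i < pfun w hex hpr (i+1) ∧
    ∀ j, pfun w hex hpr i < j → j < pfun w hex hpr (i+1) → w j ≠ 0 := by
  rcases le_or_gt 0 i with hi | hi
  · have e1 : pfun w hex hpr i = qseq w hex i.toNat := by unfold pfun; rw [if_pos hi]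
    have e2 : pfun w hex hpr (i+1) = qseq w hex (i.toNat + 1) := by
      unfold pfun; rw [if_pos (by omega)]
      congr 1; omega
    rw [e1, e2]
    set a := qseq w hex i.toNat with ha
    have e3 : qseq w hex (i.toNat + 1) = nzP w hex (a + 1) := rfl
    rw [e3]
    constructor
    · have := nzP_ge w hex (a + 1); omega
    · intro j hj1 hj2
      exact nzP_min w hex (a+1) j (by omega) hj2
  · have e1 : pfun w hex hpr i = rseq w hex hpr ((-(i+1)).toNat + 1) := by
      unfold pfun; rw [if_neg (by omega)]
      congr 1; omega
    have e2 : pfun w hex hpr (i+1) = rseq w hex hpr (-(i+1)).toNat := by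
      unfold pfun; split
      · have hi1 : i + 1 = 0 := by omega
        rw [hi1]
        show qseq w hex (0:ℤ).toNat = _
        rw [show ((-(0:ℤ)).toNat) = 0 by omega, show ((0:ℤ).toNat) = 0 by omega]
        rfl
      · rfl
    rw [e1, e2]
    set b := rseq w hex hpr (-(i+1)).toNat with hb
    have e3 : rseq w hex hpr ((-(i+1)).toNat + 1) = pzP w hpr b := rfl
    rw [e3]
    exact ⟨pzP_lt w hpr b, fun j hj1 hj2 => pzP_min w hpr b j hj1 hj2⟩

lemma block_mem {w : ℤ → Fin 3} (hw : SquareFreeZ w) (a b : ℤ) (ha : w a = 0) (hb : w b = 0)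
    (hab : a < b) (hno : ∀ j, a < j → j < b → w j ≠ 0) :
    factorAtZ w a (b - a).toNat ∈
      ([[0,1], [0,1,2], [0,1,2,1], [0,2], [0,2,1], [0,2,1,2]] : List (List (Fin 3))) := by
  have h2 : a + 2 ≤ b := by
    by_contra h
    have hb1 : b = a + 1 := by omega
    subst hb1
    exact adj' hw a (ha.trans hb.symm)
  have nz1 : w (a+1) ≠ 0 := hno _ (by omega) (by omega)
  have h4 : b ≤ a + 4 := by
    by_contra h
    have nz2 : w (a+2) ≠ 0 := hno _ (by omega) (by omega)
    have nz3 : w (a+3) ≠ 0 := hno _ (by omega) (by omega)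
    have nz4 : w (a+4) ≠ 0 := hno _ (by omega) (by omega)
    have d1 : w (a+1) ≠ w (a+2) := by
      have := adj' hw (a+1); rwa [show a+1+1 = a+2 by ring] at this
    have d2 : w (a+2) ≠ w (a+3) := by
      have := adj' hw (a+2); rwa [show a+2+1 = a+3 by ring] at this
    have d3 : w (a+3) ≠ w (a+4) := by
      have := adj' hw (a+3); rwa [show a+3+1 = a+4 by ring] at this
    refine sq2' hw (a+1) ?_ ?_
    · rw [show a+1+2 = a+3 by ring]; exact L2 _ _ _ nz1 nz2 nz3 d1 d2
    · rw [show a+1+1 = a+2 by ring, show a+1+3 = a+4 by ring]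
      exact L2 _ _ _ nz2 nz3 nz4 d2 d3
  rcases (by omega : b = a + 2 ∨ b = a + 3 ∨ b = a + 4) with h | h | h <;> subst h
  · rw [show (a+2-a).toNat = 2 by omega, fz2, ha]
    rcases L1 _ nz1 with h1 | h1 <;> rw [h1] <;> decide
  · have nz2 : w (a+2) ≠ 0 := hno _ (by omega) (by omega)
    have d1 : w (a+1) ≠ w (a+2) := by
      have := adj' hw (a+1); rwa [show a+1+1 = a+2 by ring] at this
    rw [show (a+3-a).toNat = 3 by omega, fz3, ha]
    rcases L1 _ nz1 with h1 | h1 <;> rcases L1 _ nz2 with h2 | h2 <;> rw [h1, h2] <;>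
      first
        | decide
        | (exfalso; exact d1 (h1.trans h2.symm))
  · have nz2 : w (a+2) ≠ 0 := hno _ (by omega) (by omega)
    have nz3 : w (a+3) ≠ 0 := hno _ (by omega) (by omega)
    have d1 : w (a+1) ≠ w (a+2) := by
      have := adj' hw (a+1); rwa [show a+1+1 = a+2 by ring] at this
    have d2 : w (a+2) ≠ w (a+3) := by
      have := adj' hw (a+2); rwa [show a+2+1 = a+3 by ring] at this
    have hxz : w (a+1) = w (a+3) := L2 _ _ _ nz1 nz2 nz3 d1 d2
    rw [show (a+4-a).toNat = 4 by omega, fz4, ha, ← hxz]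
    rcases L1 _ nz1 with h1 | h1 <;> rcases L1 _ nz2 with h2 | h2 <;> rw [h1, h2] <;>
      first
        | decide
        | (exfalso; exact d1 (h1.trans h2.symm))


/-- Every square-free ℤ-word over `S = {1,2,3}` is a bi-infinite concatenation of
blocks from `{12, 123, 1232, 13, 132, 1323}`. -/
theorem stmt_15 (w : ℤ → Fin 3) (hw : SquareFreeZ w) :
    ∃ blocks : ℤ → List (Fin 3),
      (∀ i, blocks i ∈ [[0,1], [0,1,2], [0,1,2,1], [0,2], [0,2,1], [0,2,1,2]]) ∧
      ZConcat w blocks := by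
  have hex : ∀ i : ℤ, ∃ k : ℕ, w (i + k) = 0 := fun i => winE hw i
  have hpr : ∀ i : ℤ, ∃ k : ℕ, 0 < k ∧ w (i - k) = 0 := fun i => prevE hw i
  set p := pfun w hex hpr with hp
  refine ⟨fun i => factorAtZ w (p i) ((p (i+1) - p i).toNat), fun i => ?_, p, fun i => ?_, fun i => ?_⟩
  · obtain ⟨hlt, hno⟩ := pfun_step w hex hpr i
    exact block_mem hw _ _ (pfun_zero w hex hpr i) (pfun_zero w hex hpr (i+1)) hlt hno
  · show p (i+1) = p i + ((factorAtZ w (p i) ((p (i+1) - p i).toNat)).length : ℤ)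
    have hlen : (factorAtZ w (p i) ((p (i+1) - p i).toNat)).length = (p (i+1) - p i).toNat := by
      simp [factorAtZ, Function.comp_def]
    rw [hlen]
    have hlt := (pfun_step w hex hpr i).1
    rw [← hp] at hlt
    omega
  · show factorAtZ w (p i) ((p (i+1) - p i).toNat)
        = factorAtZ w (p i) (factorAtZ w (p i) ((p (i+1) - p i).toNat)).length
    have hlen : (factorAtZ w (p i) ((p (i+1) - p i).toNat)).length = (p (i+1) - p i).toNat := by
      simp [factorAtZ, Function.comp_def]
    rw [hlen]
end

section
/- The map f∘g : U* → S* is injective: if u₁ and u₂ are words over U = {a,c,d} with f(g(u₁)) = f(g(u₂)), then u₁ = u₂. -/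
def skipB (s : List (Fin 3)) : List (Fin 3) :=
  if s.take 4 = [0,1,2,0] then s.drop 3 else s

lemma skipB_len (s : List (Fin 3)) : (skipB s).length ≤ s.length := by
  unfold skipB; split <;> simp

def dec (s : List (Fin 3)) : List (Fin 3) :=
  if s.take 4 = [0,1,0,2] then 0 :: dec (skipB (s.drop 4))
  else if s.take 4 = [0,2,1,2] then 1 :: dec (skipB (s.drop 4))
  else if s.take 4 = [0,1,2,1] then 2 :: dec (skipB (s.drop 4))
  else []
termination_by s.length
decreasing_by
  all_goals
    rename_i h
    have h4 : 4 ≤ s.length := by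
      have := congrArg List.length h
      simp at this; omega
    have := skipB_len (s.drop 4)
    simp at this ⊢
    omega

lemma fW_cons (t : Fin 4) (v : List (Fin 4)) : fW (t :: v) = fL t ++ fW v := by
  simp [fW]

lemma fW_gW_cons2 (x y : Fin 3) (r : List (Fin 3)) :
    fW (gW (x :: y :: r)) =
      fL (uT x) ++ ((if needB x y then fL 1 else []) ++ fW (gW (y :: r))) := by
  show fW ((uT x :: (if needB x y then [(1 : Fin 4)] else [])) ++ gW (y :: r)) = _
  cases hb : needB x y <;> simp [fW]

lemma fW_gW_head (y : Fin 3) (r : List (Fin 3)) :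
    ∃ t, fW (gW (y :: r)) = fL (uT y) ++ t := by
  cases r with
  | nil => exact ⟨[], by simp [gW, fW]⟩
  | cons z s => exact ⟨_, fW_gW_cons2 y z s⟩

lemma skipB_key (b : Bool) (y : Fin 3) (r : List (Fin 3)) :
    skipB ((if b then fL 1 else []) ++ fW (gW (y :: r))) = fW (gW (y :: r)) := by
  obtain ⟨t, ht⟩ := fW_gW_head y r
  cases b <;> rw [ht] <;> fin_cases y <;> simp [skipB, fL, uT]

lemma skipB_key' (x y : Fin 3) (r : List (Fin 3)) :
    skipB ((if needB x y = true then ([0,1,2] : List (Fin 3)) else []) ++ fW (gW (y :: r))) =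
      fW (gW (y :: r)) := by
  cases hb : needB x y
  · simpa [hb] using skipB_key false y r
  · simpa [hb, fL] using skipB_key true y r

lemma dec_fg (u : List (Fin 3)) : dec (fW (gW u)) = u := by
  induction u with
  | nil => rw [dec]; rfl
  | cons x rest ih =>
    cases rest with
    | nil =>
      fin_cases x <;> (show dec (fW [uT _]) = _) <;> rw [dec, dec] <;>
        simp [fW, fL, uT, skipB]
    | cons y r =>
      rw [fW_gW_cons2]
      fin_cases x <;>
      · rw [dec]
        simp [fL, uT, skipB_key', ih]


/-- The map `f ∘ g : U* → S*` is injective. -/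
theorem stmt_16 (u₁ u₂ : List (Fin 3)) (h : fW (gW u₁) = fW (gW u₂)) :
    u₁ = u₂ := by
  have h1 := dec_fg u₁
  have h2 := dec_fg u₂
  rw [h] at h1
  rw [h2] at h1
  exact h1.symm
end
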